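/- arXiv:1510.02628 — 3 statements merged into one kernel-verified Lean document; each statement's English description precedes it below -/
import Mathlib

section
/- For every integer n ≥ 2 and every triangulation Δ of [n], the triangle group 𝕋_Δ is a free group of rank 3n−4; that is, 𝕋_Δ is isomorphic to the free group on 3n−4 generators. -/
open scoped Classical

noncomputable section

namespace NCPolygon

/-- Cyclic successor on `Fin n` (the vertices of the `n`-gon in cyclic order). -/
def csucc {n : ℕ} (i : Fin n) : Fin n :=
  ⟨(i.1 + 1) % n, Nat.mod_lt _ (Nat.lt_of_le_of_lt (Nat.zero_le _) i.isLt)⟩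

/-- Cyclic predecessor on `Fin n`. -/
def cpred {n : ℕ} (i : Fin n) : Fin n :=
  ⟨(i.1 + (n - 1)) % n, Nat.mod_lt _ (Nat.lt_of_le_of_lt (Nat.zero_le _) i.isLt)⟩

/-- A list of elements of `Fin n` is *cyclic* if its entries are distinct and some
cyclic rotation of it is strictly increasing. -/
def IsCyclicSeq {n : ℕ} (l : List (Fin n)) : Prop :=
  l.Nodup ∧ ∃ k : ℕ, (l.rotate k).Pairwise (· < ·)

/-- The pair `(i,k)` crosses `(j,l)` iff `(i,j,k,l)` is cyclic. -/
def Crosses {n : ℕ} (p q : Fin n × Fin n) : Prop :=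
  IsCyclicSeq [p.1, q.1, p.2, q.2]

def NonCrossing {n : ℕ} (Δ : Set (Fin n × Fin n)) : Prop :=
  (∀ p ∈ Δ, p.1 ≠ p.2) ∧ ∀ p ∈ Δ, ∀ q ∈ Δ, ¬ Crosses p q

/-- A triangulation of the `n`-gon: a maximal crossing-free set of (directed) chords. -/
def IsTriangulation {n : ℕ} (Δ : Set (Fin n × Fin n)) : Prop :=
  NonCrossing Δ ∧ ∀ Δ' : Set (Fin n × Fin n), NonCrossing Δ' → Δ ⊆ Δ' → Δ' = Δ

/-! ### The noncommutative polygon algebra `𝒜_n` -/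

abbrev OffD (n : ℕ) := {p : Fin n × Fin n // p.1 ≠ p.2}

abbrev AGen (n : ℕ) := OffD n ⊕ OffD n

def xF {n : ℕ} (i j : Fin n) : FreeAlgebra ℚ (AGen n) :=
  if h : i ≠ j then FreeAlgebra.ι ℚ (Sum.inl ⟨(i, j), h⟩) else 1

def xiF {n : ℕ} (i j : Fin n) : FreeAlgebra ℚ (AGen n) :=
  if h : i ≠ j then FreeAlgebra.ι ℚ (Sum.inr ⟨(i, j), h⟩) else 1

/-- The defining relations of `𝒜_n`: invertibility, triangle, and exchange relations. -/
inductive ARel (n : ℕ) : FreeAlgebra ℚ (AGen n) → FreeAlgebra ℚ (AGen n) → Prop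
  | mul_inv {i j : Fin n} (h : i ≠ j) : ARel n (xF i j * xiF i j) 1
  | inv_mul {i j : Fin n} (h : i ≠ j) : ARel n (xiF i j * xF i j) 1
  | triangle {i j k : Fin n} (hij : i ≠ j) (hik : i ≠ k) (hjk : j ≠ k) :
      ARel n (xF i j * xiF k j * xF k i) (xF i k * xiF j k * xF j i)
  | exchange {i j k l : Fin n} (h : IsCyclicSeq [i, j, k, l]) :
      ARel n (xF j l) (xF j k * xiF i k * xF i l + xF j i * xiF k i * xF k l)

/-- The noncommutative `n`-gon algebra `𝒜_n`. -/
abbrev NCPoly (n : ℕ) := RingQuot (ARel n)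

/-- The generator `x_{ij} ∈ 𝒜_n` (junk value `1` when `i = j`). -/
def X {n : ℕ} (i j : Fin n) : NCPoly n :=
  RingQuot.mkAlgHom ℚ (ARel n) (xF i j)

/-- The generator `x_{ij}⁻¹ ∈ 𝒜_n`. -/
def Xinv {n : ℕ} (i j : Fin n) : NCPoly n :=
  RingQuot.mkAlgHom ℚ (ARel n) (xiF i j)

/-- The noncommutative angle `T_i^{jk} = x_{ji}⁻¹ x_{jk} x_{ik}⁻¹ ∈ 𝒜_n`. -/
def Tang {n : ℕ} (i j k : Fin n) : NCPoly n := Xinv j i * X j k * Xinv i k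

/-! ### Triangle groups -/

def tF {n : ℕ} (Δ : Set (Fin n × Fin n)) (i j : Fin n) : FreeGroup Δ :=
  if h : (i, j) ∈ Δ then FreeGroup.of (⟨(i, j), h⟩ : Δ) else 1

/-- The triangle relations of the triangle group `𝕋_Δ`. -/
def triRels {n : ℕ} (Δ : Set (Fin n × Fin n)) : Set (FreeGroup Δ) :=
  { w | ∃ i j k : Fin n, i ≠ j ∧ i ≠ k ∧ j ≠ k ∧
      (i, j) ∈ Δ ∧ (j, i) ∈ Δ ∧ (i, k) ∈ Δ ∧ (k, i) ∈ Δ ∧ (j, k) ∈ Δ ∧ (k, j) ∈ Δ ∧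
      w = tF Δ i j * (tF Δ k j)⁻¹ * tF Δ k i *
        (tF Δ i k * (tF Δ j k)⁻¹ * tF Δ j i)⁻¹ }

/-- The triangle group `𝕋_Δ` of a triangulation `Δ`. -/
abbrev TriGroup {n : ℕ} (Δ : Set (Fin n × Fin n)) := PresentedGroup (triRels Δ)

/-- The generator `t_{ij} ∈ 𝕋_Δ` (junk value `1` when `(i,j) ∉ Δ`). -/
def tG {n : ℕ} (Δ : Set (Fin n × Fin n)) (i j : Fin n) : TriGroup Δ :=
  if h : (i, j) ∈ Δ then PresentedGroup.of (rels := triRels Δ) ⟨(i, j), h⟩ else 1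

/-! ### The big triangle group `𝕋_n` -/

def btF {n : ℕ} (i j : Fin n) : FreeGroup (OffD n) :=
  if h : i ≠ j then FreeGroup.of (⟨(i, j), h⟩ : OffD n) else 1

def bigRels (n : ℕ) : Set (FreeGroup (OffD n)) :=
  { w | ∃ i j k : Fin n, i ≠ j ∧ i ≠ k ∧ j ≠ k ∧
      w = btF i j * (btF k j)⁻¹ * btF k i * (btF i k * (btF j k)⁻¹ * btF j i)⁻¹ }

/-- The big triangle group `𝕋_n`. -/
abbrev BigTriGroup (n : ℕ) := PresentedGroup (bigRels n)

/-- The generator `t_{ij} ∈ 𝕋_n`. -/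
def bigT {n : ℕ} (i j : Fin n) : BigTriGroup n :=
  if h : i ≠ j then PresentedGroup.of (rels := bigRels n) ⟨(i, j), h⟩ else 1

/-! ### Distinguished subalgebras and subgroups -/

/-- `𝒜_Δ`: the subalgebra of `𝒜_n` generated by all `x_{ij}` together with the
`x_{ij}⁻¹` for `(i,j) ∈ Δ`. -/
def ADelta (n : ℕ) (Δ : Set (Fin n × Fin n)) : Subalgebra ℚ (NCPoly n) :=
  Algebra.adjoin ℚ
    ({a | ∃ i j : Fin n, i ≠ j ∧ a = X i j} ∪ {a | ∃ p ∈ Δ, a = Xinv p.1 p.2})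

/-- `𝒬_n`: the subalgebra of `𝒜_n` generated by the `y_{ij}^k = x_{ki}⁻¹ x_{kj}`. -/
def Qn (n : ℕ) : Subalgebra ℚ (NCPoly n) :=
  Algebra.adjoin ℚ
    {a : NCPoly n | ∃ i j k : Fin n, i ≠ j ∧ i ≠ k ∧ j ≠ k ∧ a = Xinv k i * X k j}

/-- `𝕌_Δ`: the subgroup of `𝕋_Δ` generated by the `u_{ij}^k = t_{ki}⁻¹ t_{kj}`. -/
def UDelta {n : ℕ} (Δ : Set (Fin n × Fin n)) : Subgroup (TriGroup Δ) :=
  Subgroup.closure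
    {g | ∃ i j k : Fin n, (k, i) ∈ Δ ∧ (k, j) ∈ Δ ∧ g = (tG Δ k i)⁻¹ * tG Δ k j}


section
variable {n : ℕ}

def cyc (a b c d : Fin n) : Prop :=
  (a < b ∧ b < c ∧ c < d) ∨ (b < c ∧ c < d ∧ d < a) ∨
  (c < d ∧ d < a ∧ a < b) ∨ (d < a ∧ a < b ∧ b < c)

lemma sorted4_iff (a b c d : Fin n) :
    ([a,b,c,d] : List (Fin n)).Pairwise (· < ·) ↔ a < b ∧ b < c ∧ c < d := by
  simp only [List.pairwise_cons, List.mem_cons, List.not_mem_nil, or_false,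
    List.mem_singleton, List.Pairwise.nil, and_true, forall_eq_or_imp, forall_eq,
    false_implies, implies_true, Fin.lt_def]
  omega

lemma isCyclicSeq4_iff (a b c d : Fin n) :
    IsCyclicSeq [a, b, c, d] ↔
      (a ≠ b ∧ a ≠ c ∧ a ≠ d ∧ b ≠ c ∧ b ≠ d ∧ c ≠ d) ∧ cyc a b c d := by
  have e0 : ([a,b,c,d] : List (Fin n)).rotate 0 = [a,b,c,d] := rfl
  have e1 : ([a,b,c,d] : List (Fin n)).rotate 1 = [b,c,d,a] := rfl
  have e2 : ([a,b,c,d] : List (Fin n)).rotate 2 = [c,d,a,b] := rfl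
  have e3 : ([a,b,c,d] : List (Fin n)).rotate 3 = [d,a,b,c] := rfl
  have hnd : ([a,b,c,d] : List (Fin n)).Nodup ↔
      (a ≠ b ∧ a ≠ c ∧ a ≠ d ∧ b ≠ c ∧ b ≠ d ∧ c ≠ d) := by
    simp only [List.nodup_cons, List.mem_cons, List.not_mem_nil, or_false,
      List.mem_singleton, List.nodup_nil, and_true, not_or]
    tauto
  constructor
  · rintro ⟨hn, k, hs⟩
    have h4 : ([a,b,c,d] : List (Fin n)).length = 4 := rfl
    have hk : ([a,b,c,d] : List (Fin n)).rotate (k % 4) = ([a,b,c,d] : List (Fin n)).rotate k := by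
      rw [← h4]; exact List.rotate_mod _ _
    rw [← hk] at hs
    refine ⟨hnd.1 hn, ?_⟩
    have : k % 4 = 0 ∨ k % 4 = 1 ∨ k % 4 = 2 ∨ k % 4 = 3 := by omega
    unfold cyc
    rcases this with h | h | h | h <;> rw [h] at hs
    · rw [e0, sorted4_iff] at hs; tauto
    · rw [e1, sorted4_iff] at hs; tauto
    · rw [e2, sorted4_iff] at hs; tauto
    · rw [e3, sorted4_iff] at hs; tauto
  · rintro ⟨hd, hc⟩
    refine ⟨hnd.2 hd, ?_⟩
    rcases hc with h | h | h | h
    · exact ⟨0, by rw [e0, sorted4_iff]; exact h⟩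
    · exact ⟨1, by rw [e1, sorted4_iff]; exact h⟩
    · exact ⟨2, by rw [e2, sorted4_iff]; exact h⟩
    · exact ⟨3, by rw [e3, sorted4_iff]; exact h⟩

/-! ### cyclic gap -/

def gap (x y : Fin n) : ℕ := if x.val ≤ y.val then y.val - x.val else y.val + n - x.val

lemma gap_eq_zero_iff (x y : Fin n) : gap x y = 0 ↔ x = y := by
  have hx := x.isLt; have hy := y.isLt
  simp only [gap, Fin.ext_iff]; split_ifs <;> omega

lemma gap_lt (x y : Fin n) : gap x y < n := by
  have hx := x.isLt; have hy := y.isLt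
  simp only [gap]; split_ifs <;> omega

lemma gap_inj {x y z : Fin n} (h : gap x y = gap x z) : y = z := by
  have hx := x.isLt; have hy := y.isLt; have hz := z.isLt
  simp only [gap] at h; rw [Fin.ext_iff]; split_ifs at h <;> omega

lemma gap_antisymm {x y : Fin n} (h : x ≠ y) : gap x y + gap y x = n := by
  have hx := x.isLt; have hy := y.isLt
  rw [ne_eq, Fin.ext_iff] at h
  simp only [gap]; split_ifs <;> omega

lemma gap_sub {p v x : Fin n} (h : gap p v ≤ gap p x) : gap v x = gap p x - gap p v := by
  have hp := p.isLt; have hv := v.isLt; have hx := x.isLt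
  simp only [gap] at *; split_ifs at * <;> omega

lemma cyc_iff_gap {a b c d : Fin n} (hab : a ≠ b) (hac : a ≠ c) (had : a ≠ d) :
    cyc a b c d ↔ gap a b < gap a c ∧ gap a c < gap a d := by
  have ha := a.isLt; have hb := b.isLt; have hc := c.isLt; have hd := d.isLt
  rw [ne_eq, Fin.ext_iff] at hab hac had
  simp only [cyc, gap, Fin.lt_def]; split_ifs <;> omega

lemma cyc_rotate {a b c d : Fin n} : cyc a b c d → cyc b c d a := by
  unfold cyc; tauto

/-! ### structure of triangulations -/

variable {Δ : Set (Fin n × Fin n)} (hΔ : IsTriangulation Δ)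
include hΔ

lemma mem_ne {i j : Fin n} (h : (i,j) ∈ Δ) : i ≠ j := hΔ.1.1 _ h

lemma mem_of_not_conf {i j : Fin n} (hij : i ≠ j)
    (h : ∀ q ∈ Δ, ¬Crosses (i,j) q ∧ ¬Crosses q (i,j)) : (i,j) ∈ Δ := by
  have hself : ¬Crosses ((i,j) : Fin n × Fin n) (i,j) := by
    rw [Crosses, isCyclicSeq4_iff]; rintro ⟨⟨h1,_⟩,_⟩; exact h1 rfl
  have hnc : NonCrossing (insert ((i,j) : Fin n × Fin n) Δ) := by
    constructor
    · rintro p (rfl | hp); · exact hij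
      exact hΔ.1.1 _ hp
    · rintro p (rfl | hp) q (rfl | hq)
      · exact hself
      · exact (h q hq).1
      · exact (h p hp).2
      · exact hΔ.1.2 p hp q hq
  have := hΔ.2 _ hnc (Set.subset_insert _ _)
  rw [← this]; exact Set.mem_insert _ _

lemma mem_symm {i j : Fin n} (h : (i,j) ∈ Δ) : (j,i) ∈ Δ := by
  have hij : i ≠ j := hΔ.1.1 _ h
  apply mem_of_not_conf hΔ hij.symm
  intro q hq
  constructor
  · -- ¬ Crosses (j,i) q
    intro hcr
    rw [Crosses, isCyclicSeq4_iff] at hcr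
    obtain ⟨⟨d1,d2,d3,d4,d5,d6⟩, hc⟩ := hcr
    -- cyc j q1 i q2 → cyc q1 i q2 j = Crosses q (i,j)
    have : Crosses q ((i,j) : Fin n × Fin n) := by
      rw [Crosses, isCyclicSeq4_iff]
      exact ⟨by tauto, cyc_rotate hc⟩
    exact hΔ.1.2 q hq _ h this
  · intro hcr
    rw [Crosses, isCyclicSeq4_iff] at hcr
    obtain ⟨⟨d1,d2,d3,d4,d5,d6⟩, hc⟩ := hcr
    -- cyc q1 j q2 i → rotate thrice → cyc i q1 j q2 = Crosses (i,j) q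
    have : Crosses ((i,j) : Fin n × Fin n) q := by
      rw [Crosses, isCyclicSeq4_iff]
      exact ⟨by tauto, cyc_rotate (cyc_rotate (cyc_rotate hc))⟩
    exact hΔ.1.2 _ h q hq this

omit hΔ in
lemma not_crosses_of_adj {x y : Fin n} (h : gap x y = 1) (q : Fin n × Fin n) :
    ¬Crosses (x,y) q ∧ ¬Crosses q (x,y) := by
  obtain ⟨c, d⟩ := q
  constructor
  · intro hcr
    rw [Crosses, isCyclicSeq4_iff] at hcr
    obtain ⟨⟨d1,d2,d3,d4,d5,d6⟩, hc⟩ := hcr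
    dsimp only at *
    rw [cyc_iff_gap d1 d2 d3] at hc
    have h1 : gap x c ≠ 0 := fun h0 => d1 ((gap_eq_zero_iff _ _).1 h0)
    rw [h] at hc; omega
  · intro hcr
    rw [Crosses, isCyclicSeq4_iff] at hcr
    obtain ⟨⟨d1,d2,d3,d4,d5,d6⟩, hc⟩ := hcr
    dsimp only at *
    have hc' := cyc_rotate hc
    rw [cyc_iff_gap d4 d5 (Ne.symm d1)] at hc'
    have h1 : gap x d ≠ 0 := fun h0 => d4 ((gap_eq_zero_iff _ _).1 h0)
    rw [h] at hc'; omega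

lemma mem_of_adj {x y : Fin n} (h : gap x y = 1) : (x,y) ∈ Δ ∧ (y,x) ∈ Δ := by
  have hxy : x ≠ y := by
    intro e; rw [e] at h; rw [(gap_eq_zero_iff y y).2 rfl] at h; omega
  have h1 : (x,y) ∈ Δ := mem_of_not_conf hΔ hxy (fun q _ => not_crosses_of_adj h q)
  exact ⟨h1, mem_symm hΔ h1⟩

end

section
variable {n : ℕ} {Δ : Set (Fin n × Fin n)} (hΔ : IsTriangulation Δ)
include hΔ

lemma exists_conf_of_not_mem {i j : Fin n} (hij : i ≠ j) (h : (i,j) ∉ Δ) :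
    ∃ q ∈ Δ, Crosses (i,j) q ∨ Crosses q (i,j) := by
  by_contra hcon
  push_neg at hcon
  exact h (mem_of_not_conf hΔ hij (fun q hq => ⟨fun hc => (hcon q hq).1 hc,
    fun hc => ((hcon q hq).2) hc⟩))

lemma ear_fin {v p s : Fin n} (hpv : gap p v = 1) (hvs : gap v s = 1) (hps : gap p s = 2)
    (nbr : ∀ x, (v,x) ∈ Δ → x = p ∨ x = s) :
    (p,v) ∈ Δ ∧ (v,p) ∈ Δ ∧ (v,s) ∈ Δ ∧ (s,v) ∈ Δ ∧ (p,s) ∈ Δ ∧ (s,p) ∈ Δ ∧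
      (∀ x, (v,x) ∈ Δ → x = p ∨ x = s) ∧ (∀ x, (x,v) ∈ Δ → x = p ∨ x = s) := by
  have hps' : p ≠ s := fun h => by rw [h, (gap_eq_zero_iff s s).2 rfl] at hps; omega
  have hmem1 := mem_of_adj hΔ hpv
  have hmem2 := mem_of_adj hΔ hvs
  have hPS : (p, s) ∈ Δ := by
    apply mem_of_not_conf hΔ hps'
    rintro ⟨c, d⟩ hq
    constructor
    · intro hcr
      rw [Crosses, isCyclicSeq4_iff] at hcr
      obtain ⟨⟨d1,d2,d3,d4,d5,d6⟩, hc⟩ := hcr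
      dsimp only at *
      rw [cyc_iff_gap d1 d2 d3] at hc
      have h1 : gap p c ≠ 0 := fun h0 => d1 ((gap_eq_zero_iff _ _).1 h0)
      have hcv : c = v := gap_inj (x := p) (by omega)
      subst hcv
      rcases nbr d hq with rfl | rfl
      · exact d3 rfl
      · exact d6 rfl
    · intro hcr
      rw [Crosses, isCyclicSeq4_iff] at hcr
      obtain ⟨⟨d1,d2,d3,d4,d5,d6⟩, hc⟩ := hcr
      dsimp only at *
      have hc' := cyc_rotate hc
      rw [cyc_iff_gap d4 d5 (Ne.symm d1)] at hc'
      have h1 : gap p d ≠ 0 := fun h0 => d4 ((gap_eq_zero_iff _ _).1 h0)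
      have hdv : d = v := gap_inj (x := p) (by omega)
      subst hdv
      rcases nbr c (mem_symm hΔ hq) with rfl | rfl
      · exact d1 rfl
      · exact d3 rfl
  refine ⟨hmem1.1, hmem1.2, hmem2.1, hmem2.2, hPS, mem_symm hΔ hPS, nbr, ?_⟩
  intro x hx
  exact nbr x (mem_symm hΔ hx)

omit hΔ in
lemma succ2 (hn : 3 ≤ n) (p : Fin n) :
    ∃ v s : Fin n, gap p v = 1 ∧ gap v s = 1 ∧ gap p s = 2 := by
  have hp := p.isLt
  refine ⟨⟨if p.val + 1 = n then 0 else p.val + 1, by split_ifs <;> omega⟩,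
    ⟨if p.val + 2 ≥ n then p.val + 2 - n else p.val + 2, by split_ifs <;> omega⟩, ?_, ?_, ?_⟩ <;>
  · simp only [gap, Fin.val_mk]
    split_ifs <;> omega

lemma exists_ear (hn : 3 ≤ n) :
    ∃ v p s : Fin n, gap p v = 1 ∧ gap v s = 1 ∧
      (p,v) ∈ Δ ∧ (v,p) ∈ Δ ∧ (v,s) ∈ Δ ∧ (s,v) ∈ Δ ∧ (p,s) ∈ Δ ∧ (s,p) ∈ Δ ∧
      (∀ x, (v,x) ∈ Δ → x = p ∨ x = s) ∧ (∀ x, (x,v) ∈ Δ → x = p ∨ x = s) := by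
  rcases eq_or_lt_of_le hn with h3 | h4
  · -- n = 3
    have h3 : n = 3 := h3.symm
    subst h3
    obtain ⟨v, s, hpv, hvs, hps⟩ := succ2 (le_refl 3) (⟨0, by omega⟩ : Fin 3)
    have hv1 : v.val = 1 := by
      simp only [gap, Fin.val_mk] at hpv; have := v.isLt; split_ifs at hpv <;> omega
    have hs2 : s.val = 2 := by
      simp only [gap, Fin.val_mk] at hps; have := s.isLt; split_ifs at hps <;> omega
    have nbr : ∀ x : Fin 3, (v, x) ∈ Δ → x = (⟨0, by omega⟩ : Fin 3) ∨ x = s := by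
      intro x hx
      have hne := mem_ne hΔ hx
      rw [ne_eq, Fin.ext_iff] at hne
      have hx3 := x.isLt
      have : x.val = 0 ∨ x.val = 2 := by omega
      rcases this with h | h
      · left; exact Fin.ext h
      · right; exact Fin.ext (by omega)
    have := ear_fin hΔ hpv hvs hps nbr
    exact ⟨v, _, s, hpv, hvs, by tauto⟩
  · -- n ≥ 4
    have hn4 : 4 ≤ n := h4
    -- a diagonal exists
    have hex : ∃ m, ∃ x y : Fin n, (x,y) ∈ Δ ∧ 2 ≤ gap x y ∧ gap x y ≤ n - 2 ∧ gap x y = m := by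
      have h0n : (0 : ℕ) < n := by omega
      have h2n : (2 : ℕ) < n := by omega
      by_cases hmem : ((⟨0, h0n⟩ : Fin n), (⟨2, h2n⟩ : Fin n)) ∈ Δ
      · refine ⟨2, _, _, hmem, ?_, ?_, ?_⟩ <;> · simp only [gap, Fin.val_mk]; split_ifs <;> omega
      · have hne : (⟨0, h0n⟩ : Fin n) ≠ ⟨2, h2n⟩ := by rw [ne_eq, Fin.ext_iff]; simp
        obtain ⟨⟨c, d⟩, hq, hcr⟩ := exists_conf_of_not_mem hΔ hne hmem
        have hcl := c.isLt; have hdl := d.isLt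
        rcases hcr with hcr | hcr
        · rw [Crosses, isCyclicSeq4_iff] at hcr
          obtain ⟨⟨d1,d2,d3,d4,d5,d6⟩, hc⟩ := hcr
          dsimp only at *
          rw [cyc_iff_gap d1 d2 d3] at hc
          rw [ne_eq, Fin.ext_iff, Fin.val_mk] at d1 d3
          refine ⟨gap c d, c, d, hq, ?_, ?_, rfl⟩ <;>
          · simp only [gap, Fin.val_mk] at hc ⊢; split_ifs at * <;> omega
        · rw [Crosses, isCyclicSeq4_iff] at hcr
          obtain ⟨⟨d1,d2,d3,d4,d5,d6⟩, hc⟩ := hcr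
          dsimp only at *
          have hc2 := cyc_rotate hc
          rw [cyc_iff_gap d4 d5 (Ne.symm d1)] at hc2
          rw [ne_eq, Fin.ext_iff, Fin.val_mk] at d4
          have d6v : d.val ≠ 2 := by
            intro h; exact d6 (Fin.ext (by simp [Fin.val_mk, h]))
          refine ⟨gap c d, c, d, hq, ?_, ?_, rfl⟩ <;>
          · simp only [gap, Fin.val_mk] at hc2 ⊢; split_ifs at * <;> omega
    obtain ⟨p, q, hpq, h2m, hm2, hm0⟩ := Nat.find_spec hex
    set m0 := Nat.find hex with hm0def
    have hmin : ∀ m < m0, ¬ ∃ x y : Fin n, (x,y) ∈ Δ ∧ 2 ≤ gap x y ∧ gap x y ≤ n - 2 ∧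
        gap x y = m := fun m hm => Nat.find_min hex hm
    obtain ⟨v, s, hpv, hvs, hps⟩ := succ2 (by omega) p
    have hpne : p ≠ v := by
      intro h; rw [h, (gap_eq_zero_iff v v).2 rfl] at hpv; omega
    have hvq : v ≠ q := by
      intro h; rw [h] at hpv; omega
    have nbr : ∀ x, (v, x) ∈ Δ → x = p ∨ x = s := by
      intro x hx
      by_contra hcon
      push_neg at hcon
      obtain ⟨hxp, hxs⟩ := hcon
      have hvx : v ≠ x := mem_ne hΔ hx
      have hg0 : gap p x ≠ 0 := fun h0 => hxp ((gap_eq_zero_iff _ _).1 h0).symm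
      have hg1 : gap p x ≠ 1 := by
        intro h1; exact hvx (gap_inj (x := p) (by omega)).symm
      have hgviff : gap v x ≠ 1 := by
        intro h1; exact hxs (gap_inj (x := v) (by omega))
      by_cases hle : gap p x ≤ m0
      · -- smaller diagonal (v,x)
        have hsub : gap v x = gap p x - gap p v := gap_sub (p := p) (by omega)
        rw [hpv] at hsub
        apply hmin (gap p x - 1) (by omega)
        exact ⟨v, x, hx, by omega, by omega, by omega⟩
      · -- crossing with (p,q)
        push_neg at hle
        have hpx : p ≠ x := fun h => hg0 (by rw [h, (gap_eq_zero_iff x x).2 rfl])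
        have hpq' : p ≠ q := mem_ne hΔ hpq
        have hqx : q ≠ x := by
          intro h; rw [h] at hm0; omega
        have hcyc : cyc p v q x := by
          rw [cyc_iff_gap hpne hpq' hpx]; omega
        have : Crosses ((p,q) : Fin n × Fin n) (v,x) := by
          rw [Crosses, isCyclicSeq4_iff]
          exact ⟨⟨hpne, hpq', hpx, hvq, hvx, hqx⟩, hcyc⟩
        exact hΔ.1.2 _ hpq _ hx this
    have := ear_fin hΔ hpv hvs hps nbr
    exact ⟨v, p, s, hpv, hvs, by tauto⟩

end

section
variable {n : ℕ}

def umap (v : Fin n) (y : Fin (n-1)) : Fin n :=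
  if y.val < v.val then ⟨y.val, by have := y.isLt; omega⟩
  else ⟨y.val + 1, by have := y.isLt; omega⟩

def dmap (hn : 2 ≤ n) (v x : Fin n) : Fin (n-1) :=
  if h : x.val < v.val then ⟨x.val, by have := v.isLt; omega⟩
  else ⟨x.val - 1, by have := x.isLt; omega⟩

lemma umap_val (v : Fin n) (y : Fin (n-1)) :
    (umap v y).val = if y.val < v.val then y.val else y.val + 1 := by
  unfold umap; split_ifs <;> rfl

lemma dmap_val (hn : 2 ≤ n) (v x : Fin n) :
    (dmap hn v x).val = if x.val < v.val then x.val else x.val - 1 := by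
  unfold dmap; split_ifs <;> rfl

lemma umap_ne {v : Fin n} (y : Fin (n-1)) : umap v y ≠ v := by
  have := y.isLt; have := v.isLt
  rw [ne_eq, Fin.ext_iff, umap_val]; split_ifs <;> omega

lemma umap_inj {v : Fin n} {a b : Fin (n-1)} (h : umap v a = umap v b) : a = b := by
  have := a.isLt; have := b.isLt
  rw [Fin.ext_iff, umap_val, umap_val] at h; rw [Fin.ext_iff]
  split_ifs at h <;> omega

lemma dmap_umap (hn : 2 ≤ n) (v : Fin n) (y : Fin (n-1)) : dmap hn v (umap v y) = y := by
  have := y.isLt; have := v.isLt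
  rw [Fin.ext_iff, dmap_val, umap_val]
  split_ifs <;> omega

lemma umap_dmap (hn : 2 ≤ n) {v x : Fin n} (h : x ≠ v) : umap v (dmap hn v x) = x := by
  have := x.isLt; have := v.isLt
  rw [ne_eq, Fin.ext_iff] at h
  rw [Fin.ext_iff, umap_val, dmap_val]
  split_ifs <;> omega

lemma umap_lt_iff {v : Fin n} {a b : Fin (n-1)} : umap v a < umap v b ↔ a < b := by
  have := a.isLt; have := b.isLt; have := v.isLt
  rw [Fin.lt_def, Fin.lt_def, umap_val, umap_val]
  split_ifs <;> omega

lemma cyc_umap {v : Fin n} {a b c d : Fin (n-1)} :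
    cyc (umap v a) (umap v b) (umap v c) (umap v d) ↔ cyc a b c d := by
  simp only [cyc, umap_lt_iff]

lemma crosses_umap {v : Fin n} {a b c d : Fin (n-1)} :
    Crosses (umap v a, umap v b) (umap v c, umap v d) ↔ Crosses ((a,b) : Fin (n-1) × Fin (n-1)) (c,d) := by
  rw [Crosses, Crosses, isCyclicSeq4_iff, isCyclicSeq4_iff]
  dsimp only
  rw [cyc_umap]
  constructor
  · rintro ⟨⟨h1,h2,h3,h4,h5,h6⟩, hc⟩
    exact ⟨⟨fun h => h1 (by rw [h]), fun h => h2 (by rw [h]), fun h => h3 (by rw [h]),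
      fun h => h4 (by rw [h]), fun h => h5 (by rw [h]), fun h => h6 (by rw [h])⟩, hc⟩
  · rintro ⟨⟨h1,h2,h3,h4,h5,h6⟩, hc⟩
    exact ⟨⟨fun h => h1 (umap_inj h), fun h => h2 (umap_inj h), fun h => h3 (umap_inj h),
      fun h => h4 (umap_inj h), fun h => h5 (umap_inj h), fun h => h6 (umap_inj h)⟩, hc⟩

variable {Δ : Set (Fin n × Fin n)} (hΔ : IsTriangulation Δ)
include hΔ

omit hΔ in
lemma not_crosses_of_adj' {x y : Fin n} (h : gap y x = 1) (q : Fin n × Fin n) :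
    ¬Crosses (x,y) q ∧ ¬Crosses q (x,y) := by
  obtain ⟨c, d⟩ := q
  constructor
  · intro hcr
    rw [Crosses, isCyclicSeq4_iff] at hcr
    obtain ⟨⟨d1,d2,d3,d4,d5,d6⟩, hc⟩ := hcr
    dsimp only at *
    have hc' := cyc_rotate (cyc_rotate hc)
    rw [cyc_iff_gap d6 (Ne.symm d2) (Ne.symm d4)] at hc'
    have h1 : gap y d ≠ 0 := fun h0 => d6 ((gap_eq_zero_iff _ _).1 h0)
    rw [h] at hc'; omega
  · intro hcr
    rw [Crosses, isCyclicSeq4_iff] at hcr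
    obtain ⟨⟨d1,d2,d3,d4,d5,d6⟩, hc⟩ := hcr
    dsimp only at *
    have hc' := cyc_rotate (cyc_rotate (cyc_rotate hc))
    rw [cyc_iff_gap (Ne.symm d3) (Ne.symm d5) (Ne.symm d6)] at hc'
    have h1 : gap y c ≠ 0 := fun h0 => d3 ((gap_eq_zero_iff _ _).1 h0).symm
    rw [h] at hc'; omega

omit hΔ in
lemma vchord_no_cross {v p s : Fin n} (hpv : gap p v = 1) (hvs : gap v s = 1)
    (nbr : ∀ x, (v,x) ∈ Δ → x = p ∨ x = s) (nbr' : ∀ x, (x,v) ∈ Δ → x = p ∨ x = s)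
    {q : Fin n × Fin n} (hq : q ∈ Δ) (hv : q.1 = v ∨ q.2 = v) (r : Fin n × Fin n) :
    ¬Crosses q r ∧ ¬Crosses r q := by
  obtain ⟨x, y⟩ := q
  dsimp only at hv
  rcases hv with rfl | rfl
  · rcases nbr y hq with rfl | rfl
    · exact not_crosses_of_adj' hpv r
    · exact not_crosses_of_adj hvs r
  · rcases nbr' x hq with rfl | rfl
    · exact not_crosses_of_adj hpv r
    · exact not_crosses_of_adj' hvs r

lemma delta'_triangulation (hn : 2 ≤ n) {v p s : Fin n} (hpv : gap p v = 1) (hvs : gap v s = 1)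
    (nbr : ∀ x, (v,x) ∈ Δ → x = p ∨ x = s) (nbr' : ∀ x, (x,v) ∈ Δ → x = p ∨ x = s) :
    IsTriangulation {q : Fin (n-1) × Fin (n-1) | (umap v q.1, umap v q.2) ∈ Δ} := by
  set Δ' := {q : Fin (n-1) × Fin (n-1) | (umap v q.1, umap v q.2) ∈ Δ} with hΔ'def
  constructor
  · constructor
    · rintro ⟨a, b⟩ hq h
      exact mem_ne hΔ hq (by dsimp only at h ⊢; rw [h])
    · rintro ⟨a, b⟩ ha ⟨c, d⟩ hc hcr
      exact hΔ.1.2 _ ha _ hc (crosses_umap.2 hcr)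
  · intro Δ'' hnc hsub
    set L := ((fun q : Fin (n-1) × Fin (n-1) => (umap v q.1, umap v q.2)) '' Δ'') ∪
      {q ∈ Δ | q.1 = v ∨ q.2 = v} with hLdef
    have hLnc : NonCrossing L := by
      constructor
      · rintro q (⟨r, hr, rfl⟩ | ⟨hq, _⟩)
        · exact fun h => hnc.1 r hr (umap_inj h)
        · exact mem_ne hΔ hq
      · rintro q hq r hr hcr
        rcases hq with ⟨q', hq', rfl⟩ | ⟨hq1, hq2⟩
        · rcases hr with ⟨r', hr', rfl⟩ | ⟨hr1, hr2⟩
          · exact hnc.2 q' hq' r' hr' (by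
              obtain ⟨a, b⟩ := q'; obtain ⟨c, d⟩ := r'
              exact crosses_umap.1 hcr)
          · exact (vchord_no_cross hpv hvs nbr nbr' hr1 hr2 _).2 hcr
        · exact (vchord_no_cross hpv hvs nbr nbr' hq1 hq2 _).1 hcr
    have hΔL : Δ ⊆ L := by
      intro q hq
      by_cases hv : q.1 = v ∨ q.2 = v
      · exact Or.inr ⟨hq, hv⟩
      · push_neg at hv
        left
        refine ⟨(dmap hn v q.1, dmap hn v q.2), hsub ?_, ?_⟩
        · show (umap v (dmap hn v q.1), umap v (dmap hn v q.2)) ∈ Δ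
          rw [umap_dmap hn hv.1, umap_dmap hn hv.2]
          exact hq
        · dsimp only
          rw [umap_dmap hn hv.1, umap_dmap hn hv.2]
    have hLΔ : L = Δ := hΔ.2 L hLnc hΔL
    apply Set.Subset.antisymm _ hsub
    intro q hq
    show (umap v q.1, umap v q.2) ∈ Δ
    rw [← hLΔ]
    exact Or.inl ⟨q, hq, rfl⟩

end

section

variable {n : ℕ} {Δ : Set (Fin n × Fin n)}

lemma tF_mem {i j : Fin n} (h : (i,j) ∈ Δ) : tF Δ i j = FreeGroup.of (⟨(i,j),h⟩ : Δ) := by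
  rw [tF, dif_pos h]

lemma tG_mk {i j : Fin n} (h : (i,j) ∈ Δ) :
    tG Δ i j = PresentedGroup.mk (triRels Δ) (tF Δ i j) := by
  rw [tG, dif_pos h, tF_mem h]; rfl

lemma tG_of {i j : Fin n} (h : (i,j) ∈ Δ) :
    tG Δ i j = PresentedGroup.of (rels := triRels Δ) ⟨(i,j), h⟩ := by
  rw [tG, dif_pos h]

lemma mk_rel_one {w : FreeGroup Δ} (hw : w ∈ triRels Δ) :
    PresentedGroup.mk (triRels Δ) w = 1 := by
  have : w ∈ Subgroup.normalClosure (triRels Δ) := Subgroup.subset_normalClosure hw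
  exact (QuotientGroup.eq_one_iff w).2 this

lemma tri_rel_holds {i j k : Fin n}
    (hij : i ≠ j) (hik : i ≠ k) (hjk : j ≠ k)
    (h1 : (i,j) ∈ Δ) (h2 : (j,i) ∈ Δ) (h3 : (i,k) ∈ Δ)
    (h4 : (k,i) ∈ Δ) (h5 : (j,k) ∈ Δ) (h6 : (k,j) ∈ Δ) :
    tG Δ i j * (tG Δ k j)⁻¹ * tG Δ k i *
      (tG Δ i k * (tG Δ j k)⁻¹ * tG Δ j i)⁻¹ = 1 := by
  rw [tG_mk h1, tG_mk h6, tG_mk h4, tG_mk h3, tG_mk h5, tG_mk h2]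
  simp only [← map_inv, ← map_mul]
  exact mk_rel_one ⟨i, j, k, hij, hik, hjk, h1, h2, h3, h4, h5, h6, rfl⟩

lemma lift_tF {G : Type*} [Group G] (f : Δ → G) {i j : Fin n} (h : (i,j) ∈ Δ) :
    FreeGroup.lift f (tF Δ i j) = f ⟨(i,j),h⟩ := by
  rw [tF_mem h, FreeGroup.lift_apply_of]

end

section

lemma base_two {Δ : Set (Fin 2 × Fin 2)} (hΔ : IsTriangulation Δ) :
    Nonempty (TriGroup Δ ≃* FreeGroup (Fin 2)) := by
  have h01 : ((0 : Fin 2), (1 : Fin 2)) ≠ ((1 : Fin 2), (0 : Fin 2)) := by decide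
  have hfull : ∀ i j : Fin 2, i ≠ j → (i, j) ∈ Δ := by
    intro i j hij
    apply mem_of_not_conf hΔ hij
    rintro ⟨c, d⟩ hq
    constructor <;>
    · intro hcr
      rw [Crosses, isCyclicSeq4_iff] at hcr
      obtain ⟨⟨d1,d2,d3,d4,d5,d6⟩, _⟩ := hcr
      rw [ne_eq, Fin.ext_iff] at d1 d2 d3 d4 d5 d6
      have := i.isLt; have := j.isLt; have := c.isLt; have := d.isLt
      dsimp only at *
      omega
  have hclass : ∀ x : ↥Δ, (x : Fin 2 × Fin 2) = (0, 1) ∨ (x : Fin 2 × Fin 2) = (1, 0) := by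
    rintro ⟨⟨a, b⟩, hab⟩
    have hne : a ≠ b := mem_ne hΔ hab
    rw [ne_eq, Fin.ext_iff] at hne
    have := a.isLt; have := b.isLt
    dsimp only
    rcases (show a.val = 0 ∨ a.val = 1 by omega) with h | h <;>
      rcases (show b.val = 0 ∨ b.val = 1 by omega) with h' | h'
    · omega
    · left; rw [Prod.ext_iff]; exact ⟨Fin.ext h, Fin.ext h'⟩
    · right; rw [Prod.ext_iff]; exact ⟨Fin.ext h, Fin.ext h'⟩
    · omega
  have hrels : triRels Δ = ∅ := by
    ext w
    simp only [Set.mem_empty_iff_false, iff_false]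
    rintro ⟨i, j, k, hij, hik, hjk, _⟩
    rw [ne_eq, Fin.ext_iff] at hij hik hjk
    have := i.isLt; have := j.isLt; have := k.isLt
    omega
  have hm01 : ((0 : Fin 2), (1 : Fin 2)) ∈ Δ := hfull 0 1 (by decide)
  have hm10 : ((1 : Fin 2), (0 : Fin 2)) ∈ Δ := hfull 1 0 (by decide)
  set fb : ↥Δ → FreeGroup (Fin 2) :=
    fun q => if (q : Fin 2 × Fin 2).1 = 0 then FreeGroup.of 0 else FreeGroup.of 1 with hfb
  have hvac : ∀ r ∈ triRels Δ, FreeGroup.lift fb r = 1 := by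
    intro r hr; rw [hrels] at hr; exact absurd hr (Set.notMem_empty r)
  set φ : TriGroup Δ →* FreeGroup (Fin 2) := PresentedGroup.toGroup hvac with hφ
  set gb : Fin 2 → TriGroup Δ := fun m => if m = 0 then tG Δ 0 1 else tG Δ 1 0 with hgb
  set ψ : FreeGroup (Fin 2) →* TriGroup Δ := FreeGroup.lift gb with hψ
  have htG01 : tG Δ 0 1 = PresentedGroup.of (rels := triRels Δ) ⟨(0,1), hm01⟩ := by
    rw [tG, dif_pos hm01]
  have htG10 : tG Δ 1 0 = PresentedGroup.of (rels := triRels Δ) ⟨(1,0), hm10⟩ := by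
    rw [tG, dif_pos hm10]
  have hψφ : ψ.comp φ = MonoidHom.id _ := by
    apply PresentedGroup.ext
    intro x
    rcases hclass x with h | h
    · have hx : x = ⟨(0,1), hm01⟩ := Subtype.ext h
      subst hx
      show ψ (φ (PresentedGroup.of ⟨(0,1), hm01⟩)) = PresentedGroup.of ⟨(0,1), hm01⟩
      rw [hφ, PresentedGroup.toGroup.of]
      have : fb ⟨(0,1), hm01⟩ = FreeGroup.of 0 := by rw [hfb]; simp
      rw [this, hψ, FreeGroup.lift_apply_of]
      rw [hgb]; simp [htG01]
    · have hx : x = ⟨(1,0), hm10⟩ := Subtype.ext h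
      subst hx
      show ψ (φ (PresentedGroup.of ⟨(1,0), hm10⟩)) = PresentedGroup.of ⟨(1,0), hm10⟩
      rw [hφ, PresentedGroup.toGroup.of]
      have : fb ⟨(1,0), hm10⟩ = FreeGroup.of 1 := by rw [hfb]; simp
      rw [this, hψ, FreeGroup.lift_apply_of]
      rw [hgb]; simp [htG10]
  have hφψ : φ.comp ψ = MonoidHom.id _ := by
    apply FreeGroup.ext_hom
    intro m
    show φ (ψ (FreeGroup.of m)) = FreeGroup.of m
    rw [hψ, FreeGroup.lift_apply_of, hgb]
    have hm2 := m.isLt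
    have : m = 0 ∨ m = 1 := by
      rcases (show m.val = 0 ∨ m.val = 1 by omega) with h | h
      exacts [Or.inl (Fin.ext h), Or.inr (Fin.ext h)]
    rcases this with h | h
    · rw [h]
      show φ (if (0 : Fin 2) = 0 then tG Δ 0 1 else tG Δ 1 0) = FreeGroup.of 0
      rw [if_pos rfl, htG01, hφ, PresentedGroup.toGroup.of]
      rw [hfb]; simp
    · rw [h]
      show φ (if (1 : Fin 2) = 0 then tG Δ 0 1 else tG Δ 1 0) = FreeGroup.of 1
      rw [if_neg (by decide : ¬(1 : Fin 2) = 0), htG10, hφ, PresentedGroup.toGroup.of]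
      rw [hfb]; simp
  exact ⟨MonoidHom.toMulEquiv φ ψ hψφ hφψ⟩

end

section

lemma step_iso {n : ℕ} (hn2 : 2 ≤ n) {Δ : Set (Fin n × Fin n)} (hΔ : IsTriangulation Δ)
    {v p s : Fin n}
    (m_pv : (p,v) ∈ Δ) (m_vp : (v,p) ∈ Δ) (m_vs : (v,s) ∈ Δ) (m_sv : (s,v) ∈ Δ)
    (m_ps : (p,s) ∈ Δ) (m_sp : (s,p) ∈ Δ)
    (nbr : ∀ x, (v,x) ∈ Δ → x = p ∨ x = s) (nbr' : ∀ x, (x,v) ∈ Δ → x = p ∨ x = s)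
    {M : ℕ}
    (e : TriGroup {q : Fin (n-1) × Fin (n-1) | (umap v q.1, umap v q.2) ∈ Δ} ≃*
      FreeGroup (Fin M)) :
    Nonempty (TriGroup Δ ≃* FreeGroup (Fin M ⊕ Fin 3)) := by
  classical
  set Δ' : Set (Fin (n-1) × Fin (n-1)) :=
    {q : Fin (n-1) × Fin (n-1) | (umap v q.1, umap v q.2) ∈ Δ} with hΔ'def
  have hpv : p ≠ v := mem_ne hΔ m_pv
  have hvs : v ≠ s := mem_ne hΔ m_vs
  have hps : p ≠ s := mem_ne hΔ m_ps
  set d : Fin n → Fin (n-1) := dmap hn2 v with hd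
  have hdinj : ∀ x y : Fin n, x ≠ v → y ≠ v → d x = d y → x = y := by
    intro x y hx hy h
    rw [← umap_dmap hn2 hx, ← umap_dmap hn2 hy]
    exact congrArg (umap v) h
  have hmem' : ∀ x y : Fin n, x ≠ v → y ≠ v → ((x,y) ∈ Δ ↔ (d x, d y) ∈ Δ') := by
    intro x y hx hy
    show _ ↔ (umap v (d x), umap v (d y)) ∈ Δ
    rw [hd, umap_dmap hn2 hx, umap_dmap hn2 hy]
  set F := FreeGroup (Fin M ⊕ Fin 3) with hF
  set K : TriGroup Δ' →* F := (FreeGroup.map Sum.inl).comp e.toMonoidHom with hK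
  set G : Fin n → Fin n → F := fun x y => K (tG Δ' (d x) (d y)) with hG
  set W : F := FreeGroup.of (Sum.inr 1) * (G p s)⁻¹ * FreeGroup.of (Sum.inr 0) *
    (FreeGroup.of (Sum.inr 2))⁻¹ * G s p with hW
  set f : ↥Δ → F := fun q =>
    if (q : Fin n × Fin n).1 = v then
      (if (q : Fin n × Fin n).2 = p then W else FreeGroup.of (Sum.inr 1))
    else if (q : Fin n × Fin n).2 = v then
      (if (q : Fin n × Fin n).1 = p then FreeGroup.of (Sum.inr 0)
       else FreeGroup.of (Sum.inr 2))
    else G (q : Fin n × Fin n).1 (q : Fin n × Fin n).2 with hf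
  -- evaluation lemmas for f
  have hfG : ∀ (x y : Fin n) (h : (x,y) ∈ Δ), x ≠ v → y ≠ v → f ⟨(x,y),h⟩ = G x y := by
    intro x y h hx hy
    show (if x = v then _ else if y = v then _ else G x y) = G x y
    rw [if_neg hx, if_neg hy]
  have hfW : ∀ (x y : Fin n) (h : (x,y) ∈ Δ), x = v → y = p → f ⟨(x,y),h⟩ = W := by
    intro x y h hx hy
    show (if x = v then (if y = p then W else _) else _) = W
    rw [if_pos hx, if_pos hy]
  have hf1 : ∀ (x y : Fin n) (h : (x,y) ∈ Δ), x = v → y = s →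
      f ⟨(x,y),h⟩ = FreeGroup.of (Sum.inr 1) := by
    intro x y h hx hy
    show (if x = v then (if y = p then _ else _) else _) = _
    rw [if_pos hx, if_neg (by rw [hy]; exact Ne.symm hps)]
  have hf0 : ∀ (x y : Fin n) (h : (x,y) ∈ Δ), x = p → y = v →
      f ⟨(x,y),h⟩ = FreeGroup.of (Sum.inr 0) := by
    intro x y h hx hy
    show (if x = v then _ else if y = v then (if x = p then _ else _) else _) = _
    rw [if_neg (by rw [hx]; exact hpv), if_pos hy, if_pos hx]
  have hf2 : ∀ (x y : Fin n) (h : (x,y) ∈ Δ), x = s → y = v →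
      f ⟨(x,y),h⟩ = FreeGroup.of (Sum.inr 2) := by
    intro x y h hx hy
    show (if x = v then _ else if y = v then (if x = p then _ else _) else _) = _
    rw [if_neg (by rw [hx]; exact Ne.symm hvs), if_pos hy,
      if_neg (by rw [hx]; exact Ne.symm hps)]
  have hfPS : ∀ (x y : Fin n) (h : (x,y) ∈ Δ), x = p → y = s → f ⟨(x,y),h⟩ = G p s := by
    intro x y h hx hy
    rw [hfG x y h (by rw [hx]; exact hpv) (by rw [hy]; exact Ne.symm hvs), hx, hy]
  have hfSP : ∀ (x y : Fin n) (h : (x,y) ∈ Δ), x = s → y = p → f ⟨(x,y),h⟩ = G s p := by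
    intro x y h hx hy
    rw [hfG x y h (by rw [hx]; exact Ne.symm hvs) (by rw [hy]; exact hpv), hx, hy]
  -- the relations hold under f
  have hGrel : ∀ (i j k : Fin n), i ≠ j → i ≠ k → j ≠ k →
      i ≠ v → j ≠ v → k ≠ v →
      (i,j) ∈ Δ → (j,i) ∈ Δ → (i,k) ∈ Δ → (k,i) ∈ Δ → (j,k) ∈ Δ → (k,j) ∈ Δ →
      G i j * (G k j)⁻¹ * G k i * (G i k * (G j k)⁻¹ * G j i)⁻¹ = 1 := by
    intro i j k hij hik hjk hiv hjv hkv h1 h2 h3 h4 h5 h6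
    simp only [hG, ← map_inv, ← map_mul]
    rw [← map_one K, ← tri_rel_holds (Δ := Δ')
      (fun h => hij (hdinj _ _ hiv hjv h)) (fun h => hik (hdinj _ _ hiv hkv h))
      (fun h => hjk (hdinj _ _ hjv hkv h))
      ((hmem' _ _ hiv hjv).1 h1) ((hmem' _ _ hjv hiv).1 h2) ((hmem' _ _ hiv hkv).1 h3)
      ((hmem' _ _ hkv hiv).1 h4) ((hmem' _ _ hjv hkv).1 h5) ((hmem' _ _ hkv hjv).1 h6)]
    simp only [map_mul, map_inv]
  have hrel : ∀ r ∈ triRels Δ, FreeGroup.lift f r = 1 := by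
    rintro r ⟨i, j, k, hij, hik, hjk, h1, h2, h3, h4, h5, h6, rfl⟩
    simp only [map_mul, map_inv]
    rw [lift_tF f h1, lift_tF f h6, lift_tF f h4, lift_tF f h3, lift_tF f h5, lift_tF f h2]
    by_cases hiv : i = v
    · rcases nbr j (show (v,j) ∈ Δ by rw [← hiv]; exact h1) with hjp | hjs
      · rcases nbr k (show (v,k) ∈ Δ by rw [← hiv]; exact h3) with hkp | hks
        · exact absurd (hjp.trans hkp.symm) hjk
        · rw [hfW _ _ h1 hiv hjp, hfSP _ _ h6 hks hjp, hf2 _ _ h4 hks hiv,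
            hf1 _ _ h3 hiv hks, hfPS _ _ h5 hjp hks, hf0 _ _ h2 hjp hiv, hW]
          dsimp only [F, G] at *; group
      · rcases nbr k (show (v,k) ∈ Δ by rw [← hiv]; exact h3) with hkp | hks
        · rw [hf1 _ _ h1 hiv hjs, hfPS _ _ h6 hkp hjs, hf0 _ _ h4 hkp hiv,
            hfW _ _ h3 hiv hkp, hfSP _ _ h5 hjs hkp, hf2 _ _ h2 hjs hiv, hW]
          dsimp only [F, G] at *; group
        · exact absurd (hjs.trans hks.symm) hjk
    · by_cases hjv : j = v
      · rcases nbr' i (show (i,v) ∈ Δ by rw [← hjv]; exact h1) with hip | his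
        · rcases nbr k (show (v,k) ∈ Δ by rw [← hjv]; exact h5) with hkp | hks
          · exact absurd (hip.trans hkp.symm) hik
          · rw [hf0 _ _ h1 hip hjv, hf2 _ _ h6 hks hjv, hfSP _ _ h4 hks hip,
              hfPS _ _ h3 hip hks, hf1 _ _ h5 hjv hks, hfW _ _ h2 hjv hip, hW]
            dsimp only [F, G] at *; group
        · rcases nbr k (show (v,k) ∈ Δ by rw [← hjv]; exact h5) with hkp | hks
          · rw [hf2 _ _ h1 his hjv, hf0 _ _ h6 hkp hjv, hfPS _ _ h4 hkp his,
              hfSP _ _ h3 his hkp, hfW _ _ h5 hjv hkp, hf1 _ _ h2 hjv his, hW]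
            dsimp only [F, G] at *; group
          · exact absurd (his.trans hks.symm) hik
      · by_cases hkv : k = v
        · rcases nbr' i (show (i,v) ∈ Δ by rw [← hkv]; exact h3) with hip | his
          · rcases nbr' j (show (j,v) ∈ Δ by rw [← hkv]; exact h5) with hjp | hjs
            · exact absurd (hip.trans hjp.symm) hij
            · rw [hfPS _ _ h1 hip hjs, hf1 _ _ h6 hkv hjs, hfW _ _ h4 hkv hip,
                hf0 _ _ h3 hip hkv, hf2 _ _ h5 hjs hkv, hfSP _ _ h2 hjs hip, hW]
              dsimp only [F, G] at *; group
          · rcases nbr' j (show (j,v) ∈ Δ by rw [← hkv]; exact h5) with hjp | hjs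
            · rw [hfSP _ _ h1 his hjp, hfW _ _ h6 hkv hjp, hf1 _ _ h4 hkv his,
                hf2 _ _ h3 his hkv, hf0 _ _ h5 hjp hkv, hfPS _ _ h2 hjp his, hW]
              dsimp only [F, G] at *; group
            · exact absurd (his.trans hjs.symm) hij
        · rw [hfG _ _ h1 hiv hjv, hfG _ _ h6 hkv hjv, hfG _ _ h4 hkv hiv,
            hfG _ _ h3 hiv hkv, hfG _ _ h5 hjv hkv, hfG _ _ h2 hjv hiv]
          exact hGrel i j k hij hik hjk hiv hjv hkv h1 h2 h3 h4 h5 h6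
  set φ : TriGroup Δ →* F := PresentedGroup.toGroup hrel with hφ
  have hφof : ∀ q : ↥Δ, φ (PresentedGroup.of q) = f q := fun q => PresentedGroup.toGroup.of hrel
  -- the downward map on generators
  set gDown : ↥Δ' → TriGroup Δ :=
    fun q => tG Δ (umap v (q : Fin (n-1) × Fin (n-1)).1)
      (umap v (q : Fin (n-1) × Fin (n-1)).2) with hgDown
  have hgD : ∀ (a b : Fin (n-1)) (h : (a,b) ∈ Δ'),
      gDown ⟨(a,b),h⟩ = tG Δ (umap v a) (umap v b) := fun _ _ _ => rfl
  have hmaprel : ∀ r ∈ triRels Δ', FreeGroup.lift gDown r = 1 := by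
    rintro r ⟨a, b, c, hab, hac, hbc, g1, g2, g3, g4, g5, g6, rfl⟩
    simp only [map_mul, map_inv]
    rw [lift_tF gDown g1, lift_tF gDown g6, lift_tF gDown g4, lift_tF gDown g3,
      lift_tF gDown g5, lift_tF gDown g2]
    rw [hgD _ _ g1, hgD _ _ g6, hgD _ _ g4, hgD _ _ g3, hgD _ _ g5, hgD _ _ g2]
    exact tri_rel_holds (Δ := Δ) (fun h => hab (umap_inj h)) (fun h => hac (umap_inj h))
      (fun h => hbc (umap_inj h)) g1 g2 g3 g4 g5 g6
  set hmap : TriGroup Δ' →* TriGroup Δ := PresentedGroup.toGroup hmaprel with hhmap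
  have hmapof : ∀ q : ↥Δ', hmap (PresentedGroup.of q) = gDown q :=
    fun q => PresentedGroup.toGroup.of hmaprel
  set gg : Fin M ⊕ Fin 3 → TriGroup Δ := fun m =>
    match m with
    | Sum.inl a => hmap (e.symm (FreeGroup.of a))
    | Sum.inr r => if r = 0 then tG Δ p v else if r = 1 then tG Δ v s else tG Δ s v
    with hgg
  set ψ : F →* TriGroup Δ := FreeGroup.lift gg with hψ
  have hgg0 : gg (Sum.inr 0) = tG Δ p v := by
    show (if (0 : Fin 3) = 0 then _ else _) = _; rw [if_pos rfl]
  have hgg1 : gg (Sum.inr 1) = tG Δ v s := by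
    show (if (1 : Fin 3) = 0 then _ else if (1 : Fin 3) = 1 then _ else _) = _
    rw [if_neg (by decide), if_pos rfl]
  have hgg2 : gg (Sum.inr 2) = tG Δ s v := by
    show (if (2 : Fin 3) = 0 then _ else if (2 : Fin 3) = 1 then _ else _) = _
    rw [if_neg (by decide), if_neg (by decide)]
  have hggl : ∀ a : Fin M, gg (Sum.inl a) = hmap (e.symm (FreeGroup.of a)) := fun a => rfl
  have hψof : ∀ m : Fin M ⊕ Fin 3, ψ (FreeGroup.of m) = gg m := fun m => FreeGroup.lift_apply_of
  -- Identity A : φ ∘ hmap = K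
  have hA : φ.comp hmap = K := by
    apply PresentedGroup.ext
    rintro ⟨⟨a, b⟩, hq⟩
    have hmemab : (umap v a, umap v b) ∈ Δ := hq
    show φ (hmap (PresentedGroup.of ⟨(a,b),hq⟩)) = K (PresentedGroup.of ⟨(a,b),hq⟩)
    rw [hmapof, hgD _ _ hq, tG_of hmemab, hφof,
      hfG _ _ hmemab (umap_ne a) (umap_ne b)]
    show K (tG Δ' (dmap hn2 v (umap v a)) (dmap hn2 v (umap v b))) = _
    rw [dmap_umap hn2 v a, dmap_umap hn2 v b, tG_of (show (a,b) ∈ Δ' from hq)]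
  -- Identity B : ψ ∘ (map inl) = hmap ∘ e.symm
  have hB : ψ.comp (FreeGroup.map Sum.inl) = hmap.comp e.symm.toMonoidHom := by
    apply FreeGroup.ext_hom
    intro a
    show ψ (FreeGroup.map Sum.inl (FreeGroup.of a)) = hmap (e.symm (FreeGroup.of a))
    rw [FreeGroup.map.of, hψ, FreeGroup.lift_apply_of, hggl]
  -- ψ kills G into tG
  have hC : ∀ (x y : Fin n) (h : (x,y) ∈ Δ), x ≠ v → y ≠ v → ψ (G x y) = tG Δ x y := by
    intro x y h hx hy
    have hdxy : (d x, d y) ∈ Δ' := (hmem' x y hx hy).1 h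
    have : ψ (G x y) = (ψ.comp (FreeGroup.map Sum.inl)) (e (tG Δ' (d x) (d y))) := rfl
    rw [this, hB]
    show hmap (e.symm (e _)) = _
    rw [MulEquiv.symm_apply_apply, tG_of hdxy, hmapof, hgD _ _ hdxy,
      umap_dmap hn2 hx, umap_dmap hn2 hy]
  -- compositions
  have hφψ : φ.comp ψ = MonoidHom.id F := by
    apply FreeGroup.ext_hom
    rintro (a | r)
    · show φ (ψ (FreeGroup.of (Sum.inl a))) = FreeGroup.of (Sum.inl a)
      rw [hψ, FreeGroup.lift_apply_of, hggl]
      have : φ (hmap (e.symm (FreeGroup.of a))) = (φ.comp hmap) (e.symm (FreeGroup.of a)) := rfl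
      rw [this, hA, hK]
      show FreeGroup.map Sum.inl (e (e.symm (FreeGroup.of a))) = _
      rw [MulEquiv.apply_symm_apply, FreeGroup.map.of]
    · show φ (ψ (FreeGroup.of (Sum.inr r))) = FreeGroup.of (Sum.inr r)
      rw [hψ, FreeGroup.lift_apply_of]
      have hr3 := r.isLt
      have : r = 0 ∨ r = 1 ∨ r = 2 := by
        rcases (show r.val = 0 ∨ r.val = 1 ∨ r.val = 2 by omega) with h | h | h
        · exact Or.inl (Fin.ext h)
        · exact Or.inr (Or.inl (Fin.ext h))
        · exact Or.inr (Or.inr (Fin.ext h))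
      rcases this with rfl | rfl | rfl
      · rw [hgg0, tG_of m_pv, hφof, hf0 _ _ m_pv rfl rfl]
      · rw [hgg1, tG_of m_vs, hφof, hf1 _ _ m_vs rfl rfl]
      · rw [hgg2, tG_of m_sv, hφof, hf2 _ _ m_sv rfl rfl]
  have hψφ : ψ.comp φ = MonoidHom.id (TriGroup Δ) := by
    apply PresentedGroup.ext
    rintro ⟨⟨x, y⟩, hxy⟩
    show ψ (φ (PresentedGroup.of ⟨(x,y),hxy⟩)) = PresentedGroup.of ⟨(x,y),hxy⟩
    rw [hφof]
    by_cases hx : x = v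
    · rcases nbr y (show (v,y) ∈ Δ by rw [← hx]; exact hxy) with hyp | hys
      · -- the hard case : f = W
        rw [hfW _ _ hxy hx hyp, hW]
        dsimp only [F] at *
        simp only [map_mul, map_inv]
        rw [hψof, hψof, hψof, hgg0, hgg1, hgg2,
          hC p s m_ps hpv (Ne.symm hvs), hC s p m_sp (Ne.symm hvs) hpv, ← tG_of hxy, hx, hyp]
        have hAB := mul_inv_eq_one.mp
          (tri_rel_holds hpv hps hvs m_pv m_vp m_ps m_sp m_vs m_sv)
        calc tG Δ v s * (tG Δ p s)⁻¹ * tG Δ p v * (tG Δ s v)⁻¹ * tG Δ s p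
            = tG Δ v s * (tG Δ p s)⁻¹ * (tG Δ p v * (tG Δ s v)⁻¹ * tG Δ s p) := by group
          _ = tG Δ v s * (tG Δ p s)⁻¹ * (tG Δ p s * (tG Δ v s)⁻¹ * tG Δ v p) := by rw [hAB]
          _ = tG Δ v p := by group
      · rw [hf1 _ _ hxy hx hys, hψof, hgg1, ← tG_of hxy, hx, hys]
    · by_cases hy : y = v
      · rcases nbr' x (show (x,v) ∈ Δ by rw [← hy]; exact hxy) with hxp | hxs
        · rw [hf0 _ _ hxy hxp hy, hψof, hgg0, ← tG_of hxy, hxp, hy]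
        · rw [hf2 _ _ hxy hxs hy, hψof, hgg2, ← tG_of hxy, hxs, hy]
      · rw [hfG _ _ hxy hx hy, hC _ _ hxy hx hy]; exact tG_of hxy
  exact ⟨MonoidHom.toMulEquiv φ ψ hψφ hφψ⟩

end

section

theorem free_aux : ∀ n : ℕ, 2 ≤ n → ∀ Δ : Set (Fin n × Fin n), IsTriangulation Δ →
    Nonempty (TriGroup Δ ≃* FreeGroup (Fin (3 * n - 4))) := by
  intro n
  induction n using Nat.strong_induction_on with
  | _ n ih =>
    intro hn Δ hΔ
    rcases eq_or_lt_of_le hn with h2 | h3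
    · subst h2
      obtain ⟨e⟩ := base_two hΔ
      exact ⟨e.trans (FreeGroup.freeGroupCongr (finCongr (by norm_num)))⟩
    · have hn3 : 3 ≤ n := h3
      obtain ⟨v, p, s, hpv, hvs, m_pv, m_vp, m_vs, m_sv, m_ps, m_sp, nbr, nbr'⟩ :=
        exists_ear hΔ hn3
      have htri' := delta'_triangulation hΔ (by omega) hpv hvs nbr nbr'
      obtain ⟨e'⟩ := ih (n-1) (by omega) (by omega) _ htri'
      obtain ⟨E⟩ := step_iso (by omega) hΔ m_pv m_vp m_vs m_sv m_ps m_sp nbr nbr' e'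
      exact ⟨E.trans (FreeGroup.freeGroupCongr (finSumFinEquiv.trans
        (finCongr (by omega))))⟩

end

/-- For every `n ≥ 2` and every triangulation `Δ` of `[n]`, the triangle
group `𝕋_Δ` is a free group of rank `3n - 4`. -/
theorem triangle_group_is_free (n : ℕ) (hn : 2 ≤ n) (Δ : Set (Fin n × Fin n))
    (hΔ : IsTriangulation Δ) :
    Nonempty (TriGroup Δ ≃* FreeGroup (Fin (3 * n - 4))) :=
  free_aux n hn Δ hΔ

end NCPolygon
end
end

section
/- Let n ≥ 3, let Δ be a triangulation of [n], let Δ̲ ⊆ Δ be a directed triangulation, and fix i₀ ∈ [n]. Then 𝕋_Δ is freely generated by the elements t_{ij} with (i,j) ∈ Δ̲ \ {(i₀,i₀⁺)}; that is, the group homomorphism from the free group on the set Δ̲ \ {(i₀,i₀⁺)} to 𝕋_Δ sending each generator (i,j) to t_{ij} is an isomorphism. -/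
open scoped Classical

noncomputable section

namespace NCPolygon

/-- A directed triangulation underlying `Δ`. -/
def IsDirectedTriangulation {n : ℕ} (Δ Δu : Set (Fin n × Fin n)) : Prop :=
  Δu ⊆ Δ ∧ (∀ i : Fin n, (i, csucc i) ∈ Δu ∧ (i, cpred i) ∈ Δu) ∧
    ∀ p ∈ Δ, p.2 ≠ csucc p.1 → p.2 ≠ cpred p.1 → Xor' (p ∈ Δu) ((p.2, p.1) ∈ Δu)

/-! ### auxiliary arithmetic -/

private lemma modtwo {n v : ℕ} (hn : 0 < n) (h : v < 2 * n) :
    v % n = if v < n then v else v - n := by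
  split_ifs with hv
  · exact Nat.mod_eq_of_lt hv
  · rw [Nat.mod_eq_sub_mod (le_of_not_gt hv)]
    exact Nat.mod_eq_of_lt (by omega)

def sorted4 (w x y z : ℕ) : Prop := w < x ∧ x < y ∧ y < z

def cyc4 (w x y z : ℕ) : Prop :=
  sorted4 w x y z ∨ sorted4 x y z w ∨ sorted4 y z w x ∨ sorted4 z w x y

lemma cyc4_rot {w x y z : ℕ} (h : cyc4 w x y z) : cyc4 x y z w := by
  unfold cyc4 sorted4 at *; tauto

lemma cyc4_shift_sorted {n t w x y z : ℕ} (hn : 0 < n) (ht : t ≤ n)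
    (h1 : w < x) (h2 : x < y) (h3 : y < z) (h4 : z < n) :
    cyc4 ((w + t) % n) ((x + t) % n) ((y + t) % n) ((z + t) % n) := by
  rw [modtwo hn (show w + t < 2*n by omega), modtwo hn (show x + t < 2*n by omega),
    modtwo hn (show y + t < 2*n by omega), modtwo hn (show z + t < 2*n by omega)]
  unfold cyc4 sorted4
  split_ifs <;> omega

private lemma unshift {n t v : ℕ} (hn : 0 < n) (hv : v < n) :
    ((v + t) % n + (n - t % n)) % n = v := by
  have hd := Nat.div_add_mod t n
  have hm : t % n < n := Nat.mod_lt _ hn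
  have h1 : ((v + t) % n + (n - t % n)) % n = (v + t + (n - t % n)) % n := by
    rw [Nat.mod_add_mod]
  have h2 : v + t + (n - t % n) = v + (t / n + 1) * n := by
    have h3 : (t / n + 1) * n = n * (t / n) + n := by ring
    omega
  rw [h1, h2, Nat.add_mul_mod_self_right, Nat.mod_eq_of_lt hv]

lemma cyc4_shift {n t w x y z : ℕ} (hn : 0 < n) (ht : t ≤ n)
    (hw : w < n) (hx : x < n) (hy : y < n) (hz : z < n) (h : cyc4 w x y z) :
    cyc4 ((w + t) % n) ((x + t) % n) ((y + t) % n) ((z + t) % n) := by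
  rcases h with h | h | h | h
  · exact cyc4_shift_sorted hn ht h.1 h.2.1 h.2.2 hz
  · exact cyc4_rot (cyc4_rot (cyc4_rot (cyc4_shift_sorted hn ht h.1 h.2.1 h.2.2 hw)))
  · exact cyc4_rot (cyc4_rot (cyc4_shift_sorted hn ht h.1 h.2.1 h.2.2 hx))
  · exact cyc4_rot (cyc4_shift_sorted hn ht h.1 h.2.1 h.2.2 hy)

lemma cyc4_shift_iff {n t w x y z : ℕ} (hn : 0 < n) (ht : t ≤ n)
    (hw : w < n) (hx : x < n) (hy : y < n) (hz : z < n) :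
    cyc4 ((w + t) % n) ((x + t) % n) ((y + t) % n) ((z + t) % n) ↔ cyc4 w x y z := by
  constructor
  · intro h
    have hm : t % n < n := Nat.mod_lt _ hn
    have h2 := cyc4_shift (t := n - t % n) hn (by omega)
      (Nat.mod_lt _ hn) (Nat.mod_lt _ hn) (Nat.mod_lt _ hn) (Nat.mod_lt _ hn) h
    rwa [unshift hn hw, unshift hn hx, unshift hn hy, unshift hn hz] at h2
  · exact cyc4_shift hn ht hw hx hy hz

lemma sorted4_of_sorted {n : ℕ} {a b c d : Fin n} (h : List.Pairwise (· < ·) [a,b,c,d]) :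
    sorted4 a.1 b.1 c.1 d.1 := by
  simp only [List.pairwise_cons, List.mem_cons, List.mem_singleton] at h
  exact ⟨h.1 _ (by tauto), h.2.1 _ (by tauto), h.2.2.1 _ (by tauto)⟩

lemma sorted_of_sorted4 {n : ℕ} {a b c d : Fin n} (h : sorted4 a.1 b.1 c.1 d.1) :
    List.Pairwise (· < ·) [a,b,c,d] := by
  obtain ⟨h1, h2, h3⟩ := h
  simp only [List.pairwise_cons, List.mem_cons, List.mem_singleton]
  refine ⟨?_, ?_, ?_, by simp⟩
  · rintro x (rfl|rfl|rfl|h) <;> first | (exact Fin.lt_def.mpr (by omega)) | simp_all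
  · rintro x (rfl|rfl|h) <;> first | (exact Fin.lt_def.mpr (by omega)) | simp_all
  · rintro x (rfl|h) <;> first | (exact Fin.lt_def.mpr (by omega)) | simp_all

lemma isCyclicSeq_iff {n : ℕ} (a b c d : Fin n) :
    IsCyclicSeq [a, b, c, d] ↔
      ([a, b, c, d] : List (Fin n)).Nodup ∧ cyc4 a.1 b.1 c.1 d.1 := by
  constructor
  · rintro ⟨nd, k, hk⟩
    refine ⟨nd, ?_⟩
    have hrot : ([a,b,c,d] : List (Fin n)).rotate (k % 4) = [a,b,c,d].rotate k :=
      List.rotate_mod _ k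
    rcases (show k % 4 = 0 ∨ k % 4 = 1 ∨ k % 4 = 2 ∨ k % 4 = 3 by omega) with h | h | h | h <;>
      rw [h] at hrot <;> rw [← hrot] at hk
    · exact Or.inl (sorted4_of_sorted hk)
    · exact Or.inr (Or.inl (sorted4_of_sorted hk))
    · exact Or.inr (Or.inr (Or.inl (sorted4_of_sorted hk)))
    · exact Or.inr (Or.inr (Or.inr (sorted4_of_sorted hk)))
  · rintro ⟨nd, h | h | h | h⟩
    · exact ⟨nd, 0, sorted_of_sorted4 h⟩
    · exact ⟨nd, 1, sorted_of_sorted4 h⟩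
    · exact ⟨nd, 2, sorted_of_sorted4 h⟩
    · exact ⟨nd, 3, sorted_of_sorted4 h⟩


/-! ### coordinates -/

def co {n : ℕ} (i₀ x : Fin n) : ℕ := (x.1 + (n - (csucc i₀).1)) % n

lemma csucc_val {n : ℕ} (x : Fin n) :
    (x.1 + 1 < n ∧ (csucc x).1 = x.1 + 1) ∨ (x.1 + 1 = n ∧ (csucc x).1 = 0) := by
  have hx := x.isLt
  have e : (csucc x).1 = (x.1 + 1) % n := rfl
  rcases Nat.lt_or_ge (x.1 + 1) n with h | h
  · exact Or.inl ⟨h, by rw [e, Nat.mod_eq_of_lt h]⟩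
  · have h' : x.1 + 1 = n := by omega
    exact Or.inr ⟨h', by rw [e, h', Nat.mod_self]⟩

lemma cpred_val {n : ℕ} (x : Fin n) :
    (x.1 = 0 ∧ (cpred x).1 = n - 1) ∨ (0 < x.1 ∧ (cpred x).1 = x.1 - 1) := by
  have hx := x.isLt
  have hn : 0 < n := Fin.pos x
  have e : (cpred x).1 = (x.1 + (n - 1)) % n := rfl
  rw [modtwo hn (by omega)] at e
  split_ifs at e
  · exact Or.inl ⟨by omega, by omega⟩
  · exact Or.inr ⟨by omega, by omega⟩

lemma cpred_csucc {n : ℕ} (x : Fin n) : cpred (csucc x) = x := by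
  have h1 := csucc_val x
  have h2 := cpred_val (csucc x)
  have := x.isLt
  exact Fin.ext (by omega)

lemma csucc_cpred {n : ℕ} (x : Fin n) : csucc (cpred x) = x := by
  have h1 := cpred_val x
  have h2 := csucc_val (cpred x)
  have := x.isLt
  have := (cpred x).isLt
  exact Fin.ext (by omega)

lemma co_spec {n : ℕ} (i₀ x : Fin n) :
    (x.1 + (n - (csucc i₀).1) < n ∧ co i₀ x = x.1 + (n - (csucc i₀).1)) ∨
      (n ≤ x.1 + (n - (csucc i₀).1) ∧ co i₀ x = x.1 + (n - (csucc i₀).1) - n) := by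
  have hx := x.isLt
  have hs := (csucc i₀).isLt
  have hn : 0 < n := Fin.pos x
  have e : co i₀ x = (x.1 + (n - (csucc i₀).1)) % n := rfl
  rw [modtwo hn (by omega)] at e
  split_ifs at e
  · exact Or.inl ⟨by omega, e⟩
  · exact Or.inr ⟨by omega, e⟩

lemma co_lt {n : ℕ} (i₀ x : Fin n) : co i₀ x < n := Nat.mod_lt _ (Fin.pos x)

lemma co_inj {n : ℕ} {i₀ x y : Fin n} (h : co i₀ x = co i₀ y) : x = y := by
  have h1 := co_spec i₀ x
  have h2 := co_spec i₀ y
  have := x.isLt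
  have := y.isLt
  have := (csucc i₀).isLt
  exact Fin.ext (by omega)

lemma ne_of_co {n : ℕ} {i₀ x y : Fin n} (h : co i₀ x ≠ co i₀ y) : x ≠ y :=
  fun e => h (by rw [e])

lemma co_ne_of_ne {n : ℕ} (i₀ : Fin n) {x y : Fin n} (h : x ≠ y) : co i₀ x ≠ co i₀ y :=
  fun e => h (co_inj e)

lemma co_i₀ {n : ℕ} (i₀ : Fin n) : co i₀ i₀ = n - 1 := by
  have h1 := co_spec i₀ i₀
  have h2 := csucc_val i₀
  have := i₀.isLt
  have := (csucc i₀).isLt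
  omega

lemma co_csucc_i₀ {n : ℕ} (i₀ : Fin n) : co i₀ (csucc i₀) = 0 := by
  have h1 := co_spec i₀ (csucc i₀)
  have := (csucc i₀).isLt
  omega

lemma co_csucc {n : ℕ} {i₀ x : Fin n} (h : co i₀ x + 1 < n) :
    co i₀ (csucc x) = co i₀ x + 1 := by
  have h1 := co_spec i₀ x
  have h2 := co_spec i₀ (csucc x)
  have h3 := csucc_val x
  have := x.isLt
  have := (csucc i₀).isLt
  omega

/-! ### crossing in coordinates -/

def DST {n : ℕ} (a b c d : Fin n) : Prop :=
  a ≠ b ∧ a ≠ c ∧ a ≠ d ∧ b ≠ c ∧ b ≠ d ∧ c ≠ d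

lemma nodup_iff_DST {n : ℕ} (a b c d : Fin n) :
    ([a,b,c,d] : List (Fin n)).Nodup ↔ DST a b c d := by
  simp [List.nodup_cons, DST]
  tauto

lemma crosses_iff {n : ℕ} (i₀ : Fin n) (p q : Fin n × Fin n) :
    Crosses p q ↔ DST p.1 q.1 p.2 q.2 ∧
      cyc4 (co i₀ p.1) (co i₀ q.1) (co i₀ p.2) (co i₀ q.2) := by
  have hn : 0 < n := Fin.pos i₀
  have hs := (csucc i₀).isLt
  unfold Crosses
  rw [isCyclicSeq_iff]
  exact and_congr (nodup_iff_DST _ _ _ _)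
    (cyc4_shift_iff hn (by omega) p.1.isLt q.1.isLt p.2.isLt q.2.isLt).symm


lemma crosses_iff' {n : ℕ} (i₀ : Fin n) (a b c d : Fin n) :
    Crosses (a, c) (b, d) ↔ DST a b c d ∧
      cyc4 (co i₀ a) (co i₀ b) (co i₀ c) (co i₀ d) :=
  crosses_iff i₀ (a, c) (b, d)

/-! ### consequences of maximality -/

lemma not_crosses_self {n : ℕ} (p : Fin n × Fin n) : ¬ Crosses p p := by
  rintro ⟨nd, -⟩
  simp [List.nodup_cons] at nd

lemma mem_of_noncross {n : ℕ} {Δ : Set (Fin n × Fin n)} (hΔ : IsTriangulation Δ)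
    {x y : Fin n} (hxy : x ≠ y)
    (h : ∀ q ∈ Δ, ¬ Crosses (x, y) q ∧ ¬ Crosses q (x, y)) : (x, y) ∈ Δ := by
  have key : insert (x, y) Δ = Δ := by
    apply hΔ.2
    · constructor
      · rintro p hp
        rcases Set.mem_insert_iff.mp hp with rfl | hp
        · exact hxy
        · exact hΔ.1.1 p hp
      · rintro p hp q hq
        rcases Set.mem_insert_iff.mp hp with rfl | hp <;>
          rcases Set.mem_insert_iff.mp hq with rfl | hq
        · exact not_crosses_self _
        · exact (h q hq).1
        · exact (h p hp).2
        · exact hΔ.1.2 p hp q hq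
    · exact Set.subset_insert _ _
  rw [← key]
  exact Set.mem_insert _ _

lemma mem_rev {n : ℕ} {Δ : Set (Fin n × Fin n)} (hΔ : IsTriangulation Δ)
    {a b : Fin n} (hab : (a, b) ∈ Δ) : (b, a) ∈ Δ := by
  have hne : b ≠ a := (hΔ.1.1 _ hab).symm
  have i₀ : Fin n := a
  apply mem_of_noncross hΔ hne
  intro q hq
  constructor
  · intro hcr
    obtain ⟨d, c⟩ := (crosses_iff' i₀ b q.1 a q.2).mp hcr
    obtain ⟨h1, h2, h3, h4, h5, h6⟩ := d
    exact hΔ.1.2 q hq (a, b) hab ((crosses_iff' i₀ q.1 a q.2 b).mpr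
      ⟨⟨h4, h5, h1.symm, h6, h2.symm, h3.symm⟩, cyc4_rot c⟩)
  · intro hcr
    obtain ⟨d, c⟩ := (crosses_iff' i₀ q.1 b q.2 a).mp hcr
    obtain ⟨h1, h2, h3, h4, h5, h6⟩ := d
    exact hΔ.1.2 (a, b) hab q hq ((crosses_iff' i₀ a q.1 b q.2).mpr
      ⟨⟨h3.symm, h5.symm, h6.symm, h1, h2, h4⟩, cyc4_rot (cyc4_rot (cyc4_rot c))⟩)

lemma no_cross4 {n : ℕ} {Δ : Set (Fin n × Fin n)} (hΔ : IsTriangulation Δ) (i₀ : Fin n)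
    {a b c d : Fin n} (hac : (a, c) ∈ Δ) (hbd : (b, d) ∈ Δ)
    (h1 : co i₀ a < co i₀ b) (h2 : co i₀ b < co i₀ c) (h3 : co i₀ c < co i₀ d) : False := by
  refine hΔ.1.2 (a, c) hac (b, d) hbd ((crosses_iff' i₀ a b c d).mpr
    ⟨⟨ne_of_co (i₀ := i₀) (by omega), ne_of_co (i₀ := i₀) (by omega),
      ne_of_co (i₀ := i₀) (by omega), ne_of_co (i₀ := i₀) (by omega),
      ne_of_co (i₀ := i₀) (by omega), ne_of_co (i₀ := i₀) (by omega)⟩,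
      Or.inl ⟨h1, h2, h3⟩⟩)

lemma exists_apex {n : ℕ} {Δ Δu : Set (Fin n × Fin n)} (hΔ : IsTriangulation Δ)
    (hΔu : IsDirectedTriangulation Δ Δu) (i₀ : Fin n) {a b : Fin n}
    (hab : (a, b) ∈ Δ) (hlt : co i₀ a + 1 < co i₀ b) :
    ∃ c, co i₀ a < co i₀ c ∧ co i₀ c < co i₀ b ∧
      (a, c) ∈ Δ ∧ (c, a) ∈ Δ ∧ (b, c) ∈ Δ ∧ (c, b) ∈ Δ := by
  classical
  have hbn := co_lt i₀ b
  set T : Finset (Fin n) :=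
    Finset.univ.filter (fun c => co i₀ a < co i₀ c ∧ co i₀ c < co i₀ b ∧ (a, c) ∈ Δ) with hT
  have hTne : T.Nonempty := by
    refine ⟨csucc a, ?_⟩
    rw [hT, Finset.mem_filter]
    have hca : co i₀ (csucc a) = co i₀ a + 1 := co_csucc (by omega)
    exact ⟨Finset.mem_univ _, by omega, by omega, hΔu.1 (hΔu.2.1 a).1⟩
  obtain ⟨c, hcT, hmax⟩ := T.exists_max_image (fun c => co i₀ c) hTne
  rw [hT, Finset.mem_filter] at hcT
  obtain ⟨-, hc1, hc2, hac⟩ := hcT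
  have key : ∀ u v : Fin n, (u, v) ∈ Δ → co i₀ c < co i₀ u → co i₀ u < co i₀ b →
      (co i₀ v < co i₀ c ∨ co i₀ b < co i₀ v) → False := by
    intro u v huv hu1 hu2 hv
    rcases hv with hv | hv
    · rcases Nat.lt_trichotomy (co i₀ v) (co i₀ a) with h | h | h
      · exact no_cross4 hΔ i₀ (mem_rev hΔ huv) hab h (by omega) (by omega)
      · have hva : v = a := co_inj h
        subst hva
        have hmem : u ∈ T := by
          rw [hT, Finset.mem_filter]
          exact ⟨Finset.mem_univ _, by omega, hu2, mem_rev hΔ huv⟩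
        have := hmax u hmem
        omega
      · exact no_cross4 hΔ i₀ hac (mem_rev hΔ huv) h (by omega) hu1
    · exact no_cross4 hΔ i₀ hab huv (by omega) (by omega) hv
  have hcb : (c, b) ∈ Δ := by
    apply mem_of_noncross hΔ (ne_of_co (i₀ := i₀) (by omega))
    intro q hq
    constructor
    · intro hcr
      obtain ⟨-, hc⟩ := (crosses_iff' i₀ c q.1 b q.2).mp hcr
      rcases hc with h | h | h | h <;> obtain ⟨x1, x2, x3⟩ := h
      · exact key q.1 q.2 hq x1 x2 (Or.inr x3)
      · omega
      · omega
      · exact key q.1 q.2 hq x2 x3 (Or.inl x1)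
    · intro hcr
      obtain ⟨-, hc⟩ := (crosses_iff' i₀ q.1 c q.2 b).mp hcr
      rcases hc with h | h | h | h <;> obtain ⟨x1, x2, x3⟩ := h
      · exact key q.2 q.1 (mem_rev hΔ hq) x2 x3 (Or.inl x1)
      · exact key q.2 q.1 (mem_rev hΔ hq) x1 x2 (Or.inr x3)
      · omega
      · omega
  exact ⟨c, hc1, hc2, hac, mem_rev hΔ hac, mem_rev hΔ hcb, hcb⟩

lemma apex_uniq {n : ℕ} {Δ : Set (Fin n × Fin n)} (hΔ : IsTriangulation Δ) (i₀ : Fin n)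
    {x y c c' : Fin n}
    (h1 : min (co i₀ x) (co i₀ y) < co i₀ c) (h2 : co i₀ c < max (co i₀ x) (co i₀ y))
    (h3 : (x, c) ∈ Δ) (h4 : (y, c) ∈ Δ)
    (h1' : min (co i₀ x) (co i₀ y) < co i₀ c') (h2' : co i₀ c' < max (co i₀ x) (co i₀ y))
    (h3' : (x, c') ∈ Δ) (h4' : (y, c') ∈ Δ) : c = c' := by
  rcases Nat.lt_trichotomy (co i₀ c) (co i₀ c') with h | h | h
  · exfalso
    rcases Nat.le_total (co i₀ x) (co i₀ y) with hxy | hxy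
    · exact no_cross4 hΔ i₀ h3' (mem_rev hΔ h4) (by omega) h (by omega)
    · exact no_cross4 hΔ i₀ h4' (mem_rev hΔ h3) (by omega) h (by omega)
  · exact co_inj h
  · exfalso
    rcases Nat.le_total (co i₀ x) (co i₀ y) with hxy | hxy
    · exact no_cross4 hΔ i₀ h3 (mem_rev hΔ h4') (by omega) h (by omega)
    · exact no_cross4 hΔ i₀ h4 (mem_rev hΔ h3') (by omega) h (by omega)


/-! ### structure of eliminated generators -/

lemma gap2 {n : ℕ} {Δ Δu : Set (Fin n × Fin n)} (hn : 3 ≤ n) (hΔ : IsTriangulation Δ)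
    (hΔu : IsDirectedTriangulation Δ Δu) (i₀ : Fin n) {x y : Fin n}
    (hp : (x, y) ∈ Δ) (hps : (x, y) ∉ Δu \ {(i₀, csucc i₀)}) :
    min (co i₀ x) (co i₀ y) + 2 ≤ max (co i₀ x) (co i₀ y) := by
  by_contra hcon
  have hne : co i₀ x ≠ co i₀ y := co_ne_of_ne i₀ (hΔ.1.1 _ hp)
  have h1 := co_lt i₀ x
  have h2 := co_lt i₀ y
  have hn1 := co_i₀ i₀
  rcases (show co i₀ y = co i₀ x + 1 ∨ co i₀ x = co i₀ y + 1 by omega) with h | h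
  · have hsc : y = csucc x := co_inj (i₀ := i₀) (by rw [co_csucc (i₀ := i₀) (x := x) (by omega)]; omega)
    apply hps
    simp only [Set.mem_diff, Set.mem_singleton_iff]
    refine ⟨by rw [hsc]; exact (hΔu.2.1 x).1, fun he => ?_⟩
    have e1 : x = i₀ := congrArg Prod.fst he
    rw [e1, hn1] at h
    omega
  · have hsc : x = csucc y := co_inj (i₀ := i₀) (by rw [co_csucc (i₀ := i₀) (x := y) (by omega)]; omega)
    apply hps
    simp only [Set.mem_diff, Set.mem_singleton_iff]
    constructor
    · have h' := (hΔu.2.1 (csucc y)).2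
      rw [cpred_csucc] at h'
      rw [hsc]; exact h'
    · intro he
      have e1 : x = i₀ := congrArg Prod.fst he
      have e2 : y = csucc i₀ := congrArg Prod.snd he
      rw [e1, hn1] at h
      rw [e2, co_csucc_i₀] at h
      omega

lemma xorS {n : ℕ} {Δ Δu : Set (Fin n × Fin n)} (hn : 3 ≤ n)
    (hΔu : IsDirectedTriangulation Δ Δu) (i₀ : Fin n) {x y : Fin n}
    (hp : (x, y) ∈ Δ)
    (hgap : min (co i₀ x) (co i₀ y) + 2 ≤ max (co i₀ x) (co i₀ y)) :
    Xor' ((x, y) ∈ Δu \ {(i₀, csucc i₀)}) ((y, x) ∈ Δu \ {(i₀, csucc i₀)}) := by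
  have h1 := co_lt i₀ x
  have h2 := co_lt i₀ y
  have hni := co_i₀ i₀
  have hsi := co_csucc_i₀ i₀
  have hrevmem : (csucc i₀, i₀) ∈ Δu := by
    have h' := (hΔu.2.1 (csucc i₀)).2
    rwa [cpred_csucc] at h'
  by_cases hch : (co i₀ x = 0 ∧ co i₀ y = n - 1) ∨ (co i₀ x = n - 1 ∧ co i₀ y = 0)
  · rcases hch with ⟨ha, hb⟩ | ⟨ha, hb⟩
    · -- (x,y) = (csucc i₀, i₀) : kept; reverse is the removed edge
      have e1 : x = csucc i₀ := co_inj (i₀ := i₀) (by omega)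
      have e2 : y = i₀ := co_inj (i₀ := i₀) (by omega)
      refine Or.inl ⟨?_, ?_⟩
      · simp only [Set.mem_diff, Set.mem_singleton_iff]
        refine ⟨by rw [e1, e2]; exact hrevmem, fun he => ?_⟩
        have e3 : x = i₀ := congrArg Prod.fst he
        rw [e3, hni] at ha
        omega
      · intro hB
        exact hB.2 (by rw [e1, e2]; exact rfl)
    · -- (x,y) = (i₀, csucc i₀) : the removed edge; reverse kept
      have e1 : x = i₀ := co_inj (i₀ := i₀) (by omega)
      have e2 : y = csucc i₀ := co_inj (i₀ := i₀) (by omega)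
      refine Or.inr ⟨?_, ?_⟩
      · simp only [Set.mem_diff, Set.mem_singleton_iff]
        refine ⟨by rw [e1, e2]; exact hrevmem, fun he => ?_⟩
        have e3 : y = i₀ := congrArg Prod.fst he
        rw [e3, hni] at hb
        omega
      · intro hA
        exact hA.2 (by rw [e1, e2]; exact rfl)
  · -- a genuine diagonal
    have hb1 : y ≠ csucc x := by
      intro he
      rcases (show co i₀ x + 1 < n ∨ co i₀ x = n - 1 by omega) with hlt | heq
      · have hc := co_csucc (i₀ := i₀) (x := x) hlt
        rw [← he] at hc
        omega
      · have hx1 : x = i₀ := co_inj (i₀ := i₀) (by omega)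
        have : co i₀ y = 0 := by rw [he, hx1, hsi]
        omega
    have hb2 : y ≠ cpred x := by
      intro he
      have he' : x = csucc y := by rw [he, csucc_cpred]
      rcases (show co i₀ y + 1 < n ∨ co i₀ y = n - 1 by omega) with hlt | heq
      · have hc := co_csucc (i₀ := i₀) (x := y) hlt
        rw [← he'] at hc
        omega
      · have hy1 : y = i₀ := co_inj (i₀ := i₀) (by omega)
        have : co i₀ x = 0 := by rw [he', hy1, hsi]
        omega
    have hx := hΔu.2.2 (x, y) hp hb1 hb2
    have hpe : (x, y) ≠ (i₀, csucc i₀) := by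
      intro he
      have a1 : x = i₀ := congrArg Prod.fst he
      have a2 : y = csucc i₀ := congrArg Prod.snd he
      exact hch (Or.inr ⟨by rw [a1, hni], by rw [a2, hsi]⟩)
    have hre : (y, x) ≠ (i₀, csucc i₀) := by
      intro he
      have a1 : y = i₀ := congrArg Prod.fst he
      have a2 : x = csucc i₀ := congrArg Prod.snd he
      exact hch (Or.inl ⟨by rw [a2, hsi], by rw [a1, hni]⟩)
    rcases hx with ⟨hA, hB⟩ | ⟨hB, hA⟩
    · refine Or.inl ⟨?_, ?_⟩
      · simp only [Set.mem_diff, Set.mem_singleton_iff]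
        exact ⟨hA, hpe⟩
      · intro hB'
        exact hB hB'.1
    · refine Or.inr ⟨?_, ?_⟩
      · simp only [Set.mem_diff, Set.mem_singleton_iff]
        exact ⟨hB, hre⟩
      · intro hA'
        exact hA hA'.1

lemma revS {n : ℕ} {Δ Δu : Set (Fin n × Fin n)} (hn : 3 ≤ n) (hΔ : IsTriangulation Δ)
    (hΔu : IsDirectedTriangulation Δ Δu) (i₀ : Fin n) {x y : Fin n}
    (hp : (x, y) ∈ Δ) (hps : (x, y) ∉ Δu \ {(i₀, csucc i₀)}) :
    (y, x) ∈ Δu \ {(i₀, csucc i₀)} := by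
  rcases xorS hn hΔu i₀ hp (gap2 hn hΔ hΔu i₀ hp hps) with ⟨h, -⟩ | ⟨h, -⟩
  · exact absurd h hps
  · exact h

lemma exists_apex' {n : ℕ} {Δ Δu : Set (Fin n × Fin n)} (hn : 3 ≤ n)
    (hΔ : IsTriangulation Δ) (hΔu : IsDirectedTriangulation Δ Δu) (i₀ : Fin n)
    {x y : Fin n} (hp : (x, y) ∈ Δ) (hps : (x, y) ∉ Δu \ {(i₀, csucc i₀)}) :
    ∃ c : Fin n, ((y, x) ∈ Δu \ {(i₀, csucc i₀)}) ∧
      min (co i₀ x) (co i₀ y) < co i₀ c ∧ co i₀ c < max (co i₀ x) (co i₀ y) ∧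
      (x, c) ∈ Δ ∧ (c, x) ∈ Δ ∧ (y, c) ∈ Δ ∧ (c, y) ∈ Δ := by
  have hgap := gap2 hn hΔ hΔu i₀ hp hps
  have hrev := revS hn hΔ hΔu i₀ hp hps
  rcases Nat.le_total (co i₀ x) (co i₀ y) with h | h
  · obtain ⟨c, k1, k2, k3, k4, k5, k6⟩ := exists_apex hΔ hΔu i₀ hp (by omega)
    exact ⟨c, hrev, by omega, by omega, k3, k4, k5, k6⟩
  · obtain ⟨c, k1, k2, k3, k4, k5, k6⟩ :=
      exists_apex hΔ hΔu i₀ (mem_rev hΔ hp) (by omega)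
    exact ⟨c, hrev, by omega, by omega, k5, k6, k3, k4⟩


/-! ### the collapse map into the free group on the surviving generators -/

def gfun (n : ℕ) (Δ Δu : Set (Fin n × Fin n)) (i₀ : Fin n) (p : Fin n × Fin n) :
    FreeGroup ↥(Δu \ {(i₀, csucc i₀)}) :=
  if hs : p ∈ Δu \ {(i₀, csucc i₀)} then
    FreeGroup.of (⟨p, hs⟩ : ↥(Δu \ {(i₀, csucc i₀)}))
  else if h : ∃ c : Fin n, ((p.2, p.1) ∈ Δu \ {(i₀, csucc i₀)}) ∧
      min (co i₀ p.1) (co i₀ p.2) < co i₀ c ∧ co i₀ c < max (co i₀ p.1) (co i₀ p.2) ∧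
      (p.1, c) ∈ Δ ∧ (c, p.1) ∈ Δ ∧ (p.2, c) ∈ Δ ∧ (c, p.2) ∈ Δ then
    gfun n Δ Δu i₀ (p.1, h.choose) * (gfun n Δ Δu i₀ (p.2, h.choose))⁻¹ *
      FreeGroup.of (⟨(p.2, p.1), h.choose_spec.1⟩ : ↥(Δu \ {(i₀, csucc i₀)})) *
      (gfun n Δ Δu i₀ (h.choose, p.1))⁻¹ * gfun n Δ Δu i₀ (h.choose, p.2)
  else 1
termination_by max (co i₀ p.1) (co i₀ p.2) - min (co i₀ p.1) (co i₀ p.2)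
decreasing_by
  all_goals
    obtain ⟨-, hb1, hb2, -⟩ := h.choose_spec
    omega

lemma gfun_of {n : ℕ} {Δ Δu : Set (Fin n × Fin n)} {i₀ : Fin n} {p : Fin n × Fin n}
    (hs : p ∈ Δu \ {(i₀, csucc i₀)}) :
    gfun n Δ Δu i₀ p = FreeGroup.of (⟨p, hs⟩ : ↥(Δu \ {(i₀, csucc i₀)})) := by
  rw [gfun.eq_def, dif_pos hs]

lemma gfun_spec {n : ℕ} {Δ Δu : Set (Fin n × Fin n)} {i₀ : Fin n}
    (hΔ : IsTriangulation Δ) {x y c : Fin n}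
    (hps : (x, y) ∉ Δu \ {(i₀, csucc i₀)}) (hrev : (y, x) ∈ Δu \ {(i₀, csucc i₀)})
    (hb1 : min (co i₀ x) (co i₀ y) < co i₀ c)
    (hb2 : co i₀ c < max (co i₀ x) (co i₀ y))
    (m1 : (x, c) ∈ Δ) (m2 : (c, x) ∈ Δ) (m3 : (y, c) ∈ Δ) (m4 : (c, y) ∈ Δ) :
    gfun n Δ Δu i₀ (x, y) =
      gfun n Δ Δu i₀ (x, c) * (gfun n Δ Δu i₀ (y, c))⁻¹ *
        FreeGroup.of (⟨(y, x), hrev⟩ : ↥(Δu \ {(i₀, csucc i₀)})) *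
        (gfun n Δ Δu i₀ (c, x))⁻¹ * gfun n Δ Δu i₀ (c, y) := by
  have hex : ∃ c' : Fin n, (((x, y).2, (x, y).1) ∈ Δu \ {(i₀, csucc i₀)}) ∧
      min (co i₀ (x, y).1) (co i₀ (x, y).2) < co i₀ c' ∧
      co i₀ c' < max (co i₀ (x, y).1) (co i₀ (x, y).2) ∧
      ((x, y).1, c') ∈ Δ ∧ (c', (x, y).1) ∈ Δ ∧ ((x, y).2, c') ∈ Δ ∧ (c', (x, y).2) ∈ Δ :=
    ⟨c, hrev, hb1, hb2, m1, m2, m3, m4⟩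
  rw [gfun.eq_def, dif_neg hps, dif_pos hex]
  obtain ⟨-, k1, k2, k3, k4, k5, k6⟩ := hex.choose_spec
  have hc : hex.choose = c := apex_uniq hΔ i₀ (x := x) (y := y) k1 k2 k3 k5 hb1 hb2 m1 m3
  rw [hc]


/-! ### relations in the triangle group -/

lemma tG_rel {n : ℕ} (Δ : Set (Fin n × Fin n)) {i j k : Fin n}
    (hij : i ≠ j) (hik : i ≠ k) (hjk : j ≠ k)
    (m1 : (i, j) ∈ Δ) (m2 : (j, i) ∈ Δ) (m3 : (i, k) ∈ Δ) (m4 : (k, i) ∈ Δ)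
    (m5 : (j, k) ∈ Δ) (m6 : (k, j) ∈ Δ) :
    tG Δ i j * (tG Δ k j)⁻¹ * tG Δ k i = tG Δ i k * (tG Δ j k)⁻¹ * tG Δ j i := by
  have hw : tF Δ i j * (tF Δ k j)⁻¹ * tF Δ k i *
      (tF Δ i k * (tF Δ j k)⁻¹ * tF Δ j i)⁻¹ ∈ triRels Δ :=
    ⟨i, j, k, hij, hik, hjk, m1, m2, m3, m4, m5, m6, rfl⟩
  have h1 : PresentedGroup.mk (triRels Δ) (tF Δ i j * (tF Δ k j)⁻¹ * tF Δ k i *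
      (tF Δ i k * (tF Δ j k)⁻¹ * tF Δ j i)⁻¹) = 1 :=
    (QuotientGroup.eq_one_iff _).mpr (Subgroup.subset_normalClosure hw)
  have e : ∀ (a b : Fin n) (hab : (a, b) ∈ Δ),
      PresentedGroup.mk (triRels Δ) (tF Δ a b) = tG Δ a b := by
    intro a b hab
    unfold tF tG
    rw [dif_pos hab, dif_pos hab]
    rfl
  simp only [map_mul, map_inv] at h1
  rw [e i j m1, e k j m6, e k i m4, e i k m3, e j k m5, e j i m2] at h1
  exact mul_inv_eq_one.mp h1

lemma rel_rot {G : Type*} [Group G] {p q r s t u : G} (h : p * q⁻¹ * r = s * t⁻¹ * u) :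
    t * s⁻¹ * p = u * r⁻¹ * q := by
  have h' : p = s * t⁻¹ * u * r⁻¹ * q := by rw [← h]; group
  rw [h']; group

lemma core {n : ℕ} {Δ Δu : Set (Fin n × Fin n)} (hn : 3 ≤ n) (hΔ : IsTriangulation Δ)
    (hΔu : IsDirectedTriangulation Δ Δu) (i₀ : Fin n) {a b c : Fin n}
    (hab : (a, b) ∈ Δ) (hac : (a, c) ∈ Δ) (hcb : (c, b) ∈ Δ)
    (h1 : co i₀ a < co i₀ c) (h2 : co i₀ c < co i₀ b) :
    gfun n Δ Δu i₀ (a, b) * (gfun n Δ Δu i₀ (c, b))⁻¹ * gfun n Δ Δu i₀ (c, a) =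
      gfun n Δ Δu i₀ (a, c) * (gfun n Δ Δu i₀ (b, c))⁻¹ * gfun n Δ Δu i₀ (b, a) := by
  have hba : (b, a) ∈ Δ := mem_rev hΔ hab
  have hca : (c, a) ∈ Δ := mem_rev hΔ hac
  have hbc : (b, c) ∈ Δ := mem_rev hΔ hcb
  by_cases hS : (a, b) ∈ Δu \ {(i₀, csucc i₀)}
  · -- then (b,a) is eliminated
    have hnba : (b, a) ∉ Δu \ {(i₀, csucc i₀)} := by
      rcases xorS hn hΔu i₀ (x := a) (y := b) hab (by omega) with ⟨-, hnb⟩ | ⟨-, hnb⟩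
      · exact hnb
      · exact absurd hS hnb
    have hfor := gfun_spec (x := b) (y := a) (c := c) hΔ hnba hS
      (by omega) (by omega) hbc hcb hac hca
    rw [gfun_of hS, hfor]
    group
  · -- (a,b) is eliminated
    have hrevS : (b, a) ∈ Δu \ {(i₀, csucc i₀)} := revS hn hΔ hΔu i₀ hab hS
    have hfor := gfun_spec (x := a) (y := b) (c := c) hΔ hS hrevS
      (by omega) (by omega) hac hca hbc hcb
    rw [gfun_of hrevS, hfor]
    group

lemma rel_all {n : ℕ} {Δ Δu : Set (Fin n × Fin n)} (hn : 3 ≤ n) (hΔ : IsTriangulation Δ)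
    (hΔu : IsDirectedTriangulation Δ Δu) (i₀ : Fin n) {i j k : Fin n}
    (hij : i ≠ j) (hik : i ≠ k) (hjk : j ≠ k)
    (m1 : (i, j) ∈ Δ) (m3 : (i, k) ∈ Δ) (m5 : (j, k) ∈ Δ) :
    gfun n Δ Δu i₀ (i, j) * (gfun n Δ Δu i₀ (k, j))⁻¹ * gfun n Δ Δu i₀ (k, i) =
      gfun n Δ Δu i₀ (i, k) * (gfun n Δ Δu i₀ (j, k))⁻¹ * gfun n Δ Δu i₀ (j, i) := by
  have d1 : co i₀ i ≠ co i₀ j := co_ne_of_ne i₀ hij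
  have d2 : co i₀ i ≠ co i₀ k := co_ne_of_ne i₀ hik
  have d3 : co i₀ j ≠ co i₀ k := co_ne_of_ne i₀ hjk
  have m2 : (j, i) ∈ Δ := mem_rev hΔ m1
  have m4 : (k, i) ∈ Δ := mem_rev hΔ m3
  have m6 : (k, j) ∈ Δ := mem_rev hΔ m5
  rcases Nat.lt_trichotomy (co i₀ i) (co i₀ j) with hij' | hij' | hij'
  · rcases Nat.lt_trichotomy (co i₀ j) (co i₀ k) with hjk' | hjk' | hjk'
    · -- i < j < k : middle j
      exact (core hn hΔ hΔu i₀ m3 m1 m5 hij' hjk').symm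
    · exact absurd hjk' d3
    · rcases Nat.lt_trichotomy (co i₀ i) (co i₀ k) with hik' | hik' | hik'
      · -- i < k < j : middle k
        exact core hn hΔ hΔu i₀ m1 m3 m6 hik' hjk'
      · exact absurd hik' d2
      · -- k < i < j : middle i
        exact (rel_rot (rel_rot (core hn hΔ hΔu i₀ m6 m4 m1 hik' hij'))).symm
  · exact absurd hij' d1
  · rcases Nat.lt_trichotomy (co i₀ i) (co i₀ k) with hik' | hik' | hik'
    · -- j < i < k : middle i
      exact rel_rot (rel_rot (core hn hΔ hΔu i₀ m5 m2 m3 hij' hik'))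
    · exact absurd hik' d2
    · rcases Nat.lt_trichotomy (co i₀ j) (co i₀ k) with hjk' | hjk' | hjk'
      · -- j < k < i : middle k
        exact (rel_rot (core hn hΔ hΔu i₀ m2 m5 m4 hjk' hik')).symm
      · exact absurd hjk' d3
      · -- k < j < i : middle j
        exact rel_rot (core hn hΔ hΔu i₀ m4 m6 m2 hjk' hij')


lemma lift_kill {n : ℕ} {Δ Δu : Set (Fin n × Fin n)} (hn : 3 ≤ n)
    (hΔ : IsTriangulation Δ) (hΔu : IsDirectedTriangulation Δ Δu) (i₀ : Fin n) :
    ∀ r ∈ triRels Δ,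
      FreeGroup.lift (fun x : ↥Δ => gfun n Δ Δu i₀ x.val) r = 1 := by
  rintro r ⟨i, j, k, hij, hik, hjk, m1, m2, m3, m4, m5, m6, rfl⟩
  unfold tF
  rw [dif_pos m1, dif_pos m6, dif_pos m4, dif_pos m3, dif_pos m5, dif_pos m2]
  simp only [map_mul, map_inv, FreeGroup.lift_apply_of]
  rw [mul_inv_eq_one]
  exact rel_all hn hΔ hΔu i₀ hij hik hjk m1 m3 m5

lemma lift_g {n : ℕ} {Δ Δu : Set (Fin n × Fin n)} (hn : 3 ≤ n)
    (hΔ : IsTriangulation Δ) (hΔu : IsDirectedTriangulation Δ Δu) (i₀ : Fin n) :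
    ∀ x y : Fin n, (x, y) ∈ Δ →
      FreeGroup.lift (fun p : ↥(Δu \ {(i₀, csucc i₀)}) =>
          tG Δ (↑p : Fin n × Fin n).1 (↑p : Fin n × Fin n).2)
        (gfun n Δ Δu i₀ (x, y)) = tG Δ x y := by
  suffices H : ∀ (N : ℕ) (x y : Fin n), (x, y) ∈ Δ →
      max (co i₀ x) (co i₀ y) - min (co i₀ x) (co i₀ y) < N →
      FreeGroup.lift (fun p : ↥(Δu \ {(i₀, csucc i₀)}) =>
          tG Δ (↑p : Fin n × Fin n).1 (↑p : Fin n × Fin n).2)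
        (gfun n Δ Δu i₀ (x, y)) = tG Δ x y by
    exact fun x y hp => H (max (co i₀ x) (co i₀ y) - min (co i₀ x) (co i₀ y) + 1) x y hp
      (Nat.lt_succ_self _)
  intro N
  induction N with
  | zero => exact fun x y _ h => absurd h (Nat.not_lt_zero _)
  | succ N ih =>
    intro x y hp hm
    by_cases hs : (x, y) ∈ Δu \ {(i₀, csucc i₀)}
    · rw [gfun_of hs, FreeGroup.lift_apply_of]
    · obtain ⟨c, hrev, hb1, hb2, k1, k2, k3, k4⟩ := exists_apex' hn hΔ hΔu i₀ hp hs
      rw [gfun_spec hΔ hs hrev hb1 hb2 k1 k2 k3 k4]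
      simp only [map_mul, map_inv, FreeGroup.lift_apply_of]
      rw [ih x c k1 (by omega), ih y c k3 (by omega), ih c x k2 (by omega),
        ih c y k4 (by omega)]
      have hxc : x ≠ c := ne_of_co (i₀ := i₀) (by omega)
      have hyc : y ≠ c := ne_of_co (i₀ := i₀) (by omega)
      have htri := tG_rel Δ (hΔ.1.1 _ hp) hxc hyc hp (mem_rev hΔ hp) k1 k2 k3 k4
      show tG Δ x c * (tG Δ y c)⁻¹ * tG Δ y x * (tG Δ c x)⁻¹ * tG Δ c y = tG Δ x y
      rw [← htri]
      group


/-- For `n ≥ 3`, a triangulation `Δ` of `[n]`, a directed triangulation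
`Δ̲ ⊆ Δ` and `i₀ ∈ [n]`, the group `𝕋_Δ` is freely generated by the `t_{ij}` with
`(i,j) ∈ Δ̲ \ {(i₀, i₀⁺)}`. -/
theorem triangle_group_free_basis (n : ℕ) (hn : 3 ≤ n)
    (Δ Δu : Set (Fin n × Fin n)) (hΔ : IsTriangulation Δ)
    (hΔu : IsDirectedTriangulation Δ Δu) (i₀ : Fin n) :
    Function.Bijective
      (⇑(FreeGroup.lift (fun p : ↥(Δu \ {(i₀, csucc i₀)}) =>
          tG Δ (↑p : Fin n × Fin n).1 (↑p : Fin n × Fin n).2))) := by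
  constructor
  · have hkill := lift_kill hn hΔ hΔu i₀
    have hli : Function.LeftInverse (PresentedGroup.toGroup hkill)
        (FreeGroup.lift (fun p : ↥(Δu \ {(i₀, csucc i₀)}) =>
          tG Δ (↑p : Fin n × Fin n).1 (↑p : Fin n × Fin n).2)) := by
      intro w
      induction w using FreeGroup.induction_on with
      | C1 => simp
      | of z =>
        show (PresentedGroup.toGroup hkill)
            ((FreeGroup.lift (fun p : ↥(Δu \ {(i₀, csucc i₀)}) =>
              tG Δ (↑p : Fin n × Fin n).1 (↑p : Fin n × Fin n).2)) (FreeGroup.of z)) =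
          FreeGroup.of z
        rw [FreeGroup.lift_apply_of]
        have hzΔ : ((z : Fin n × Fin n).1, (z : Fin n × Fin n).2) ∈ Δ := hΔu.1 z.2.1
        have e : tG Δ (↑z : Fin n × Fin n).1 (↑z : Fin n × Fin n).2 =
            PresentedGroup.of (rels := triRels Δ)
              ⟨((z : Fin n × Fin n).1, (z : Fin n × Fin n).2), hzΔ⟩ := by
          unfold tG
          rw [dif_pos hzΔ]
        rw [e, PresentedGroup.toGroup.of]
        rw [gfun_of (show ((z : Fin n × Fin n).1, (z : Fin n × Fin n).2) ∈
          Δu \ {(i₀, csucc i₀)} from z.2)]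
      | inv_of z ih =>
        simp only [map_inv] at ih ⊢
        rw [ih]
      | mul a b iha ihb =>
        simp only [map_mul, iha, ihb]
    exact hli.injective
  · intro Y
    obtain ⟨z, rfl⟩ := PresentedGroup.mk_surjective (triRels Δ) Y
    induction z using FreeGroup.induction_on with
    | C1 => exact ⟨1, by simp⟩
    | of z =>
      refine ⟨gfun n Δ Δu i₀ ((z : Fin n × Fin n).1, (z : Fin n × Fin n).2), ?_⟩
      rw [lift_g hn hΔ hΔu i₀ _ _ (show _ ∈ Δ from z.2)]
      unfold tG
      rw [dif_pos (show ((z : Fin n × Fin n).1, (z : Fin n × Fin n).2) ∈ Δ from z.2)]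
      rfl
    | inv_of z ih =>
      obtain ⟨w, hw⟩ := ih
      exact ⟨w⁻¹, by simp only [map_inv, hw]⟩
    | mul a b iha ihb =>
      obtain ⟨w1, hw1⟩ := iha
      obtain ⟨w2, hw2⟩ := ihb
      exact ⟨w1 * w2, by simp only [map_mul, hw1, hw2]⟩


end NCPolygon
end
end

section
/- Let n ≥ 2 and let Δ be a triangulation of [n]. Let 𝒜_Δ be the ℚ-subalgebra of 𝒜_n generated by all x_{ij} (for all distinct i,j ∈ [n]) together with x_{ij}⁻¹ for (i,j) ∈ Δ, and let S be the multiplicative submonoid of 𝒜_Δ generated by all x_{ij}, distinct i,j ∈ [n]. Then 𝒜_n is the universal localization of 𝒜_Δ by S: every element of S is a unit of 𝒜_n, and for every ℚ-algebra B and every ℚ-algebra homomorphism φ: 𝒜_Δ → B such that φ(s) is a unit of B for every s ∈ S, there exists a unique ℚ-algebra homomorphism ψ: 𝒜_n → B whose restriction to 𝒜_Δ is φ. -/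
open scoped Classical

noncomputable section

namespace NCPolygon

universe u

/-! ## Auxiliary combinatorics -/

section Comb

variable {n : ℕ}

/-- cyclic coordinate of `x` relative to base point `a`. -/
def dd (a x : Fin n) : ℕ := (x.1 + n - a.1) % n

lemma dd_def (a x : Fin n) :
    dd a x = if a.1 ≤ x.1 then x.1 - a.1 else x.1 + n - a.1 := by
  have hx := x.isLt
  have ha := a.isLt
  unfold dd
  split
  · next h =>
      have h2 : x.1 + n - a.1 = (x.1 - a.1) + n := by omega
      rw [h2, Nat.add_mod_right, Nat.mod_eq_of_lt (by omega)]
  · next h => exact Nat.mod_eq_of_lt (by omega)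

lemma dd_lt (a x : Fin n) : dd a x < n := by
  have hx := x.isLt; have ha := a.isLt
  rw [dd_def]; split <;> omega

lemma dd_self (a : Fin n) : dd a a = 0 := by rw [dd_def]; simp

lemma dd_eq_zero_iff {a x : Fin n} : dd a x = 0 ↔ x = a := by
  have hx := x.isLt; have ha := a.isLt
  rw [dd_def]
  constructor
  · intro h; apply Fin.ext; split at h <;> omega
  · rintro rfl; simp

lemma dd_inj {a x y : Fin n} (h : dd a x = dd a y) : x = y := by
  have hx := x.isLt; have hy := y.isLt; have ha := a.isLt
  rw [dd_def, dd_def] at h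
  apply Fin.ext
  split at h <;> split at h <;> omega

lemma dd_rebase (j a x : Fin n) :
    dd a x = if dd j a ≤ dd j x then dd j x - dd j a else dd j x + n - dd j a := by
  have ha := a.isLt; have hx := x.isLt; have hj := j.isLt
  simp only [dd_def]
  split_ifs <;> omega

lemma sorted4_s3 {a b c d : Fin n} :
    ([a,b,c,d] : List (Fin n)).Pairwise (· < ·) ↔ a.1 < b.1 ∧ b.1 < c.1 ∧ c.1 < d.1 := by
  simp only [List.pairwise_cons, List.mem_cons, List.mem_singleton, List.not_mem_nil,
    List.Pairwise.nil, Fin.lt_def]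
  constructor
  · rintro ⟨h1, h2, h3, -⟩
    exact ⟨h1 b (by simp), h2 c (by simp), h3 d (by simp)⟩
  · rintro ⟨h1, h2, h3⟩
    refine ⟨fun x hx => ?_, fun x hx => ?_, fun x hx => ?_, fun x hx => hx.elim, trivial⟩
    · simp only [List.mem_cons, List.mem_singleton, List.not_mem_nil, or_false] at hx
      rcases hx with rfl | rfl | rfl <;> omega
    · simp only [List.mem_cons, List.mem_singleton, List.not_mem_nil, or_false] at hx
      rcases hx with rfl | rfl <;> omega
    · simp only [List.mem_singleton, List.mem_cons, List.not_mem_nil, or_false] at hx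
      rcases hx with rfl <;> omega

/-- Characterization of cyclic quadruples by coordinates based at the first entry. -/
lemma cyc4_iff {a b c d : Fin n} :
    IsCyclicSeq [a, b, c, d] ↔ 0 < dd a b ∧ dd a b < dd a c ∧ dd a c < dd a d := by
  have ha := a.isLt; have hb := b.isLt; have hc := c.isLt; have hd := d.isLt
  constructor
  · rintro ⟨hnd, k, hsort⟩
    simp only [List.nodup_cons, List.mem_cons, List.mem_singleton, List.not_mem_nil,
      or_false, List.nodup_nil, and_true] at hnd
    have f1 : a.1 = b.1 → False := fun h => hnd.1 (Or.inl (Fin.ext h))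
    have f2 : a.1 = c.1 → False := fun h => hnd.1 (Or.inr (Or.inl (Fin.ext h)))
    have f3 : a.1 = d.1 → False := fun h => hnd.1 (Or.inr (Or.inr (Fin.ext h)))
    have f4 : b.1 = c.1 → False := fun h => hnd.2.1 (Or.inl (Fin.ext h))
    have f5 : b.1 = d.1 → False := fun h => hnd.2.1 (Or.inr (Fin.ext h))
    have f6 : c.1 = d.1 → False := fun h => hnd.2.2.1 (Fin.ext h)
    rw [← List.rotate_mod] at hsort
    have hlen : ([a,b,c,d] : List (Fin n)).length = 4 := rfl
    rw [hlen] at hsort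
    have h4 : k % 4 = 0 ∨ k % 4 = 1 ∨ k % 4 = 2 ∨ k % 4 = 3 := by omega
    rcases h4 with h | h | h | h <;> rw [h] at hsort
    · rw [show ([a,b,c,d] : List (Fin n)).rotate 0 = [a,b,c,d] by simp, sorted4_s3] at hsort
      simp only [dd_def]; split_ifs <;> omega
    · rw [show ([a,b,c,d] : List (Fin n)).rotate 1 = [b,c,d,a] by simp [List.rotate], sorted4_s3] at hsort
      simp only [dd_def]; split_ifs <;> omega
    · rw [show ([a,b,c,d] : List (Fin n)).rotate 2 = [c,d,a,b] by simp [List.rotate], sorted4_s3] at hsort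
      simp only [dd_def]; split_ifs <;> omega
    · rw [show ([a,b,c,d] : List (Fin n)).rotate 3 = [d,a,b,c] by simp [List.rotate], sorted4_s3] at hsort
      simp only [dd_def]; split_ifs <;> omega
  · rintro ⟨h1, h2, h3⟩
    simp only [dd_def] at h1 h2 h3
    have hne : (a.1 = b.1 → False) ∧ (a.1 = c.1 → False) ∧ (a.1 = d.1 → False) ∧
        (b.1 = c.1 → False) ∧ (b.1 = d.1 → False) ∧ (c.1 = d.1 → False) := by
      split_ifs at h1 h2 h3 <;> omega
    have hab : a ≠ b := fun e => hne.1 (congrArg Fin.val e)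
    have hac : a ≠ c := fun e => hne.2.1 (congrArg Fin.val e)
    have had : a ≠ d := fun e => hne.2.2.1 (congrArg Fin.val e)
    have hbc : b ≠ c := fun e => hne.2.2.2.1 (congrArg Fin.val e)
    have hbd : b ≠ d := fun e => hne.2.2.2.2.1 (congrArg Fin.val e)
    have hcd : c ≠ d := fun e => hne.2.2.2.2.2 (congrArg Fin.val e)
    constructor
    · simp only [List.nodup_cons, List.mem_cons, List.mem_singleton, List.not_mem_nil,
        or_false, List.nodup_nil, and_true]
      tauto
    · rcases le_or_gt a.1 b.1 with w1 | w1 <;> rcases le_or_gt a.1 c.1 with w2 | w2 <;>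
        rcases le_or_gt a.1 d.1 with w3 | w3 <;>
      first
        | (refine ⟨0, ?_⟩
           rw [show ([a,b,c,d] : List (Fin n)).rotate 0 = [a,b,c,d] by simp, sorted4_s3]
           split_ifs at h1 h2 h3 <;> omega)
        | (refine ⟨1, ?_⟩
           rw [show ([a,b,c,d] : List (Fin n)).rotate 1 = [b,c,d,a] by simp [List.rotate], sorted4_s3]
           split_ifs at h1 h2 h3 <;> omega)
        | (refine ⟨2, ?_⟩
           rw [show ([a,b,c,d] : List (Fin n)).rotate 2 = [c,d,a,b] by simp [List.rotate], sorted4_s3]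
           split_ifs at h1 h2 h3 <;> omega)
        | (refine ⟨3, ?_⟩
           rw [show ([a,b,c,d] : List (Fin n)).rotate 3 = [d,a,b,c] by simp [List.rotate], sorted4_s3]
           split_ifs at h1 h2 h3 <;> omega)

/-- cyclic quadruples from coordinates relative to an arbitrary base point. -/
lemma cyc4_of_dd {a b c d : Fin n} (j : Fin n)
    (h : (dd j a < dd j b ∧ dd j b < dd j c ∧ dd j c < dd j d) ∨
         (dd j b < dd j c ∧ dd j c < dd j d ∧ dd j d < dd j a) ∨
         (dd j c < dd j d ∧ dd j d < dd j a ∧ dd j a < dd j b) ∨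
         (dd j d < dd j a ∧ dd j a < dd j b ∧ dd j b < dd j c)) :
    IsCyclicSeq [a, b, c, d] := by
  have la := dd_lt j a; have lb := dd_lt j b; have lc := dd_lt j c; have ld := dd_lt j d
  rw [cyc4_iff, dd_rebase j a b, dd_rebase j a c, dd_rebase j a d]
  split_ifs <;> omega

/-- coordinates relative to an arbitrary base point from a cyclic quadruple. -/
lemma cyc4_dd {a b c d : Fin n} (j : Fin n) (h : IsCyclicSeq [a, b, c, d]) :
    (dd j a < dd j b ∧ dd j b < dd j c ∧ dd j c < dd j d) ∨
    (dd j b < dd j c ∧ dd j c < dd j d ∧ dd j d < dd j a) ∨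
    (dd j c < dd j d ∧ dd j d < dd j a ∧ dd j a < dd j b) ∨
    (dd j d < dd j a ∧ dd j a < dd j b ∧ dd j b < dd j c) := by
  have la := dd_lt j a; have lb := dd_lt j b; have lc := dd_lt j c; have ld := dd_lt j d
  rw [cyc4_iff, dd_rebase j a b, dd_rebase j a c, dd_rebase j a d] at h
  split_ifs at h <;> omega

lemma cyc4_rot_s3 {a b c d : Fin n} (h : IsCyclicSeq [a, b, c, d]) :
    IsCyclicSeq [b, c, d, a] := by
  have h2 := cyc4_dd a h
  have h0 := dd_self a
  apply cyc4_of_dd a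
  omega

lemma cyc4_ne {a b c d : Fin n} (h : IsCyclicSeq [a, b, c, d]) :
    a ≠ b ∧ a ≠ c ∧ a ≠ d ∧ b ≠ c ∧ b ≠ d ∧ c ≠ d := by
  have h1 := h.1
  simp only [List.nodup_cons, List.mem_cons, List.mem_singleton, List.not_mem_nil,
    or_false, List.nodup_nil, and_true, List.mem_singleton] at h1
  tauto

/-- crossing, symmetrized. -/
def CrossU (e c : Fin n × Fin n) : Prop := Crosses e c ∨ Crosses c e

lemma crosses_right {e : Fin n × Fin n} {x z : Fin n} :
    Crosses e (x, z) ↔ IsCyclicSeq [e.1, x, e.2, z] := Iff.rfl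

lemma crosses_left {c : Fin n × Fin n} {w y : Fin n} :
    Crosses (w, y) c ↔ IsCyclicSeq [w, c.1, y, c.2] := Iff.rfl

lemma crosses_pair {w x y z : Fin n} :
    Crosses (w, y) (x, z) ↔ IsCyclicSeq [w, x, y, z] := Iff.rfl

/-- the set of edges of `Δ` crossing a chord `c`, and its cardinality `mu`. -/
def crossSet (Δ : Set (Fin n × Fin n)) (c : Fin n × Fin n) : Set (Fin n × Fin n) :=
  {e | e ∈ Δ ∧ CrossU e c}

def mu (Δ : Set (Fin n × Fin n)) (c : Fin n × Fin n) : ℕ := (crossSet Δ c).ncard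

end Comb

section Tri

variable {n : ℕ} {Δ : Set (Fin n × Fin n)} (hΔ : IsTriangulation Δ)

lemma tri_ne (hΔ : IsTriangulation Δ) {e : Fin n × Fin n} (he : e ∈ Δ) : e.1 ≠ e.2 :=
  hΔ.1.1 e he

lemma tri_not_crossU (hΔ : IsTriangulation Δ) {e f : Fin n × Fin n}
    (he : e ∈ Δ) (hf : f ∈ Δ) : ¬ CrossU e f := by
  rintro (h | h)
  · exact hΔ.1.2 e he f hf h
  · exact hΔ.1.2 f hf e he h

/-- A chord crossing nothing in `Δ` belongs to `Δ`. -/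
lemma tri_insert (hΔ : IsTriangulation Δ) {i j : Fin n} (hij : i ≠ j)
    (h : ∀ f ∈ Δ, ¬ CrossU f (i, j)) : (i, j) ∈ Δ := by
  have key : NonCrossing (insert (i, j) Δ) := by
    constructor
    · intro p hp
      rcases Set.mem_insert_iff.mp hp with rfl | hp
      · exact hij
      · exact hΔ.1.1 p hp
    · intro p hp q hq
      rcases Set.mem_insert_iff.mp hp with rfl | hp <;>
        rcases Set.mem_insert_iff.mp hq with h2 | hq
      · rw [h2]
        intro hc
        exact (cyc4_ne hc).1 rfl
      · intro hc
        exact h q hq (Or.inr hc)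
      · rw [h2]
        intro hc
        exact h p hp (Or.inl hc)
      · exact hΔ.1.2 p hp q hq
  have heq := hΔ.2 _ key (Set.subset_insert _ _)
  rw [← heq]; exact Set.mem_insert _ _

lemma tri_symm (hΔ : IsTriangulation Δ) {i j : Fin n} (h : (i, j) ∈ Δ) : (j, i) ∈ Δ := by
  have hij := hΔ.1.1 _ h
  apply tri_insert hΔ (Ne.symm hij)
  intro f hf hc
  rcases hc with hc | hc
  · -- Crosses f (j,i) : [f1, j, f2, i] cyclic ⇒ Crosses (i,j) f
    have h2 : Crosses (i, j) f := cyc4_rot_s3 (cyc4_rot_s3 (cyc4_rot_s3 hc))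
    exact hΔ.1.2 _ h _ hf h2
  · -- Crosses (j,i) f : [j, f1, i, f2] cyclic ⇒ Crosses f (i,j)
    have h2 : Crosses f (i, j) := cyc4_rot_s3 hc
    exact hΔ.1.2 _ hf _ h h2

lemma mu_zero (hΔ : IsTriangulation Δ) {e : Fin n × Fin n} (he : e ∈ Δ) : mu Δ e = 0 := by
  have : crossSet Δ e = ∅ := by
    ext f; simp only [crossSet, Set.mem_setOf_eq, Set.mem_empty_iff_false, iff_false, not_and]
    intro hf; exact tri_not_crossU hΔ hf he
  simp [mu, this]

lemma crossU_swap {e : Fin n × Fin n} {i j : Fin n} :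
    CrossU e (j, i) ↔ CrossU e (i, j) := by
  constructor
  · rintro (hc | hc)
    · exact Or.inr (cyc4_rot_s3 (cyc4_rot_s3 (cyc4_rot_s3 hc)))
    · exact Or.inl (cyc4_rot_s3 hc)
  · rintro (hc | hc)
    · exact Or.inr (cyc4_rot_s3 (cyc4_rot_s3 (cyc4_rot_s3 hc)))
    · exact Or.inl (cyc4_rot_s3 hc)

lemma mu_swap (Δ : Set (Fin n × Fin n)) (i j : Fin n) : mu Δ (i, j) = mu Δ (j, i) := by
  unfold mu
  congr 1
  ext e
  simp only [crossSet, Set.mem_setOf_eq]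
  rw [crossU_swap]

lemma mem_of_mu_zero (hΔ : IsTriangulation Δ) {i j : Fin n} (hij : i ≠ j)
    (h : mu Δ (i, j) = 0) : (i, j) ∈ Δ := by
  apply tri_insert hΔ hij
  intro f hf hcross
  have : f ∈ crossSet Δ (i, j) := ⟨hf, hcross⟩
  have hfin : (crossSet Δ (i, j)).Finite := Set.toFinite _
  rw [mu, Set.ncard_eq_zero hfin] at h
  rw [h] at this; exact this

/-- The anchor triangle of a non-edge chord `(j,k)`. -/
lemma anchor (hΔ : IsTriangulation Δ) (hn : 2 ≤ n) {j k : Fin n} (hjk : j ≠ k)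
    (hnot : (j, k) ∉ Δ) :
    ∃ p q : Fin n, (j, p) ∈ Δ ∧ (j, q) ∈ Δ ∧ (p, q) ∈ Δ ∧
      0 < dd j p ∧ dd j p < dd j k ∧ dd j k < dd j q ∧ dd j q < n ∧
      mu Δ (p, k) < mu Δ (j, k) ∧ mu Δ (q, k) < mu Δ (j, k) := by
  have hdk0 : 0 < dd j k := by
    rcases Nat.eq_zero_or_pos (dd j k) with h | h
    · exact absurd (dd_eq_zero_iff.mp h).symm hjk
    · exact h
  have hdkn := dd_lt j k
  have hbd : ∀ t : Fin n, dd j t = 1 → (j, t) ∈ Δ := by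
    intro t h1
    have htj : j ≠ t := fun e => by rw [← e, dd_self] at h1; omega
    apply tri_insert hΔ htj
    intro f hf hc
    have l1 := dd_lt j f.1; have l2 := dd_lt j f.2
    rcases hc with hc | hc
    · have hx := cyc4_dd j (crosses_right.mp hc)
      rw [dd_self] at hx
      omega
    · have hx := cyc4_dd j (crosses_left.mp hc)
      rw [dd_self] at hx
      omega
  have hbd' : ∀ t : Fin n, dd j t = n - 1 → (j, t) ∈ Δ := by
    intro t h1
    have htj : j ≠ t := fun e => by rw [← e, dd_self] at h1; omega
    apply tri_insert hΔ htj
    intro f hf hc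
    have l1 := dd_lt j f.1; have l2 := dd_lt j f.2
    rcases hc with hc | hc
    · have hx := cyc4_dd j (crosses_right.mp hc)
      rw [dd_self] at hx
      omega
    · have hx := cyc4_dd j (crosses_left.mp hc)
      rw [dd_self] at hx
      omega
  have hdk2 : 2 ≤ dd j k := by
    by_contra h
    push_neg at h
    have : dd j k = 1 := by omega
    exact hnot (hbd k this)
  have hdkn2 : dd j k < n - 1 := by
    by_contra h
    push_neg at h
    have : dd j k = n - 1 := by omega
    exact hnot (hbd' k this)
  have hsucc : ∃ t : Fin n, dd j t = 1 := by
    have hj := j.isLt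
    refine ⟨⟨(j.1 + 1) % n, Nat.mod_lt _ (by omega)⟩, ?_⟩
    rcases Nat.lt_or_ge (j.1 + 1) n with h | h
    · have hv : ((⟨(j.1 + 1) % n, Nat.mod_lt _ (by omega)⟩ : Fin n)).1 = j.1 + 1 := by
        simp [Nat.mod_eq_of_lt h]
      rw [dd_def, hv]
      split_ifs <;> omega
    · have he : j.1 + 1 = n := by omega
      have hv : ((⟨(j.1 + 1) % n, Nat.mod_lt _ (by omega)⟩ : Fin n)).1 = 0 := by
        simp [he]
      rw [dd_def, hv]
      split_ifs <;> omega
  have hpred : ∃ t : Fin n, dd j t = n - 1 := by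
    have hj := j.isLt
    refine ⟨⟨(j.1 + (n - 1)) % n, Nat.mod_lt _ (by omega)⟩, ?_⟩
    rcases Nat.eq_zero_or_pos j.1 with h | h
    · have hv : ((⟨(j.1 + (n - 1)) % n, Nat.mod_lt _ (by omega)⟩ : Fin n)).1 = n - 1 := by
        simp [h, Nat.mod_eq_of_lt (show n - 1 < n by omega)]
      rw [dd_def, hv]
      split_ifs <;> omega
    · have he : j.1 + (n - 1) = (j.1 - 1) + n := by omega
      have hv : ((⟨(j.1 + (n - 1)) % n, Nat.mod_lt _ (by omega)⟩ : Fin n)).1 = j.1 - 1 := by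
        simp only [he, Nat.add_mod_right]
        simp [Nat.mod_eq_of_lt (show j.1 - 1 < n by omega)]
      rw [dd_def, hv]
      split_ifs <;> omega
  obtain ⟨t0, ht0⟩ := hsucc
  obtain ⟨t1, ht1⟩ := hpred
  obtain ⟨p, hpP, hpmax⟩ := Finset.exists_max_image
    (Finset.univ.filter (fun t => 0 < dd j t ∧ dd j t < dd j k ∧ (j, t) ∈ Δ)) (dd j)
    ⟨t0, Finset.mem_filter.mpr ⟨Finset.mem_univ _, by omega, by omega, hbd t0 ht0⟩⟩
  obtain ⟨q, hqQ, hqmin⟩ := Finset.exists_min_image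
    (Finset.univ.filter (fun t => dd j k < dd j t ∧ (j, t) ∈ Δ)) (dd j)
    ⟨t1, Finset.mem_filter.mpr ⟨Finset.mem_univ _, by omega, hbd' t1 ht1⟩⟩
  rw [Finset.mem_filter] at hpP hqQ
  obtain ⟨-, hp1, hp2, hjp⟩ := hpP
  obtain ⟨-, hq1, hjq⟩ := hqQ
  have hdq := dd_lt j q
  have hdp := dd_lt j p
  have hPmem : ∀ x : Fin n, 0 < dd j x → dd j x < dd j k → (j, x) ∈ Δ → dd j x ≤ dd j p :=
    fun x h1 h2 h3 => hpmax x (Finset.mem_filter.mpr ⟨Finset.mem_univ _, h1, h2, h3⟩)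
  have hQmem : ∀ x : Fin n, dd j k < dd j x → (j, x) ∈ Δ → dd j q ≤ dd j x :=
    fun x h1 h3 => hqmin x (Finset.mem_filter.mpr ⟨Finset.mem_univ _, h1, h3⟩)
  have hpq : (p, q) ∈ Δ := by
    apply tri_insert hΔ (show p ≠ q from fun e => by rw [e] at hp2; omega)
    intro f hf hcr
    have l1 := dd_lt j f.1; have l2 := dd_lt j f.2
    rcases hcr with hc | hc
    · have hx := cyc4_dd j (crosses_right.mp hc)
      have harc : (dd j p < dd j f.2 ∧ dd j f.2 < dd j q) ∧
          (dd j f.1 < dd j p ∨ dd j q < dd j f.1) := by omega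
      rcases Nat.eq_zero_or_pos (dd j f.1) with hF1 | hF1
      · have hfj : f.1 = j := dd_eq_zero_iff.mp hF1
        have hfd : (j, f.2) ∈ Δ := by rw [← hfj]; exact hf
        rcases lt_trichotomy (dd j f.2) (dd j k) with h2 | h2 | h2
        · have := hPmem f.2 (by omega) h2 hfd
          omega
        · exact hnot (by rwa [dd_inj h2] at hfd)
        · have := hQmem f.2 h2 hfd
          omega
      · rcases harc.2 with hF | hF
        · have hcc : Crosses (j, p) f := crosses_left.mpr <| cyc4_of_dd j (by rw [dd_self]; omega)
          exact hΔ.1.2 _ hjp _ hf hcc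
        · have hcc : Crosses f (j, q) := crosses_right.mpr <| cyc4_of_dd j (by rw [dd_self]; omega)
          exact hΔ.1.2 _ hf _ hjq hcc
    · have hx := cyc4_dd j (crosses_left.mp hc)
      have harc : (dd j p < dd j f.1 ∧ dd j f.1 < dd j q) ∧
          (dd j f.2 < dd j p ∨ dd j q < dd j f.2) := by omega
      have hsymf := tri_symm hΔ hf
      rcases Nat.eq_zero_or_pos (dd j f.2) with hF2 | hF2
      · have hfj : f.2 = j := dd_eq_zero_iff.mp hF2
        have hfd : (j, f.1) ∈ Δ := by rw [← hfj]; exact hsymf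
        rcases lt_trichotomy (dd j f.1) (dd j k) with h2 | h2 | h2
        · have := hPmem f.1 (by omega) h2 hfd
          omega
        · exact hnot (by rwa [dd_inj h2] at hfd)
        · have := hQmem f.1 h2 hfd
          omega
      · rcases harc.2 with hF | hF
        · have hcc : Crosses f (j, p) := crosses_right.mpr <| cyc4_of_dd j (by rw [dd_self]; omega)
          exact hΔ.1.2 _ hf _ hjp hcc
        · have hcc : Crosses (j, q) f := crosses_left.mpr <| cyc4_of_dd j (by rw [dd_self]; omega)
          exact hΔ.1.2 _ hjq _ hf hcc
  have hwit_in : (p, q) ∈ crossSet Δ (j, k) := by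
    refine ⟨hpq, Or.inr (crosses_pair.mpr ?_)⟩
    exact cyc4_of_dd j (by rw [dd_self]; omega)
  have hsubP : crossSet Δ (p, k) ⊆ crossSet Δ (j, k) := by
    rintro f ⟨hf, hcr⟩
    refine ⟨hf, ?_⟩
    have l1 := dd_lt j f.1; have l2 := dd_lt j f.2
    rcases hcr with hc | hc
    · have hx := cyc4_dd j (crosses_right.mp hc)
      have harc : (dd j p < dd j f.2 ∧ dd j f.2 < dd j k) ∧
          (dd j f.1 < dd j p ∨ dd j k < dd j f.1) := by omega
      rcases Nat.eq_zero_or_pos (dd j f.1) with hF1 | hF1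
      · exfalso
        have hfj : f.1 = j := dd_eq_zero_iff.mp hF1
        have hfd : (j, f.2) ∈ Δ := by rw [← hfj]; exact hf
        have := hPmem f.2 (by omega) (by omega) hfd
        omega
      · rcases harc.2 with hF | hF
        · exfalso
          have hcc : Crosses (j, p) f := crosses_left.mpr <| cyc4_of_dd j (by rw [dd_self]; omega)
          exact hΔ.1.2 _ hjp _ hf hcc
        · exact Or.inl (crosses_right.mpr <| cyc4_of_dd j (by rw [dd_self]; omega))
    · have hx := cyc4_dd j (crosses_left.mp hc)
      have harc : (dd j p < dd j f.1 ∧ dd j f.1 < dd j k) ∧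
          (dd j f.2 < dd j p ∨ dd j k < dd j f.2) := by omega
      have hsymf := tri_symm hΔ hf
      rcases Nat.eq_zero_or_pos (dd j f.2) with hF2 | hF2
      · exfalso
        have hfj : f.2 = j := dd_eq_zero_iff.mp hF2
        have hfd : (j, f.1) ∈ Δ := by rw [← hfj]; exact hsymf
        have := hPmem f.1 (by omega) (by omega) hfd
        omega
      · rcases harc.2 with hF | hF
        · exfalso
          have hcc : Crosses f (j, p) := crosses_right.mpr <| cyc4_of_dd j (by rw [dd_self]; omega)
          exact hΔ.1.2 _ hf _ hjp hcc
        · exact Or.inr (crosses_left.mpr <| cyc4_of_dd j (by rw [dd_self]; omega))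
  have hsubQ : crossSet Δ (q, k) ⊆ crossSet Δ (j, k) := by
    rintro f ⟨hf, hcr⟩
    refine ⟨hf, ?_⟩
    have l1 := dd_lt j f.1; have l2 := dd_lt j f.2
    have hsymf := tri_symm hΔ hf
    rcases hcr with hc | hc
    · have hx := cyc4_dd j (crosses_right.mp hc)
      have harc : (dd j k < dd j f.1 ∧ dd j f.1 < dd j q) ∧
          (dd j f.2 < dd j k ∨ dd j q < dd j f.2) := by omega
      rcases Nat.eq_zero_or_pos (dd j f.2) with hF2 | hF2
      · exfalso
        have hfj : f.2 = j := dd_eq_zero_iff.mp hF2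
        have hfd : (j, f.1) ∈ Δ := by rw [← hfj]; exact hsymf
        have := hQmem f.1 (by omega) hfd
        omega
      · rcases harc.2 with hF | hF
        · exact Or.inl (crosses_right.mpr <| cyc4_of_dd j (by rw [dd_self]; omega))
        · exfalso
          have hcc : Crosses (j, q) f := crosses_left.mpr <| cyc4_of_dd j (by rw [dd_self]; omega)
          exact hΔ.1.2 _ hjq _ hf hcc
    · have hx := cyc4_dd j (crosses_left.mp hc)
      have harc : (dd j k < dd j f.2 ∧ dd j f.2 < dd j q) ∧
          (dd j f.1 < dd j k ∨ dd j q < dd j f.1) := by omega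
      rcases Nat.eq_zero_or_pos (dd j f.1) with hF1 | hF1
      · exfalso
        have hfj : f.1 = j := dd_eq_zero_iff.mp hF1
        have hfd : (j, f.2) ∈ Δ := by rw [← hfj]; exact hf
        have := hQmem f.2 (by omega) hfd
        omega
      · rcases harc.2 with hF | hF
        · exact Or.inr (crosses_left.mpr <| cyc4_of_dd j (by rw [dd_self]; omega))
        · exfalso
          have hcc : Crosses f (j, q) := crosses_right.mpr <| cyc4_of_dd j (by rw [dd_self]; omega)
          exact hΔ.1.2 _ hf _ hjq hcc
  have hwit_notP : (p, q) ∉ crossSet Δ (p, k) := by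
    rintro ⟨-, hcr | hcr⟩
    · exact (cyc4_ne (crosses_pair.mp hcr)).1 rfl
    · exact (cyc4_ne (crosses_pair.mp hcr)).1 rfl
  have hwit_notQ : (p, q) ∉ crossSet Δ (q, k) := by
    rintro ⟨-, hcr | hcr⟩
    · exact (cyc4_ne (crosses_pair.mp hcr)).2.2.2.1 rfl
    · exact (cyc4_ne (crosses_pair.mp hcr)).2.2.1 rfl
  refine ⟨p, q, hjp, hjq, hpq, hp1, hp2, hq1, hdq, ?_, ?_⟩
  · exact Set.ncard_lt_ncard ((Set.ssubset_iff_of_subset hsubP).mpr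
      ⟨(p, q), hwit_in, hwit_notP⟩) (Set.toFinite _)
  · exact Set.ncard_lt_ncard ((Set.ssubset_iff_of_subset hsubQ).mpr
      ⟨(p, q), hwit_in, hwit_notQ⟩) (Set.toFinite _)

end Tri

/-! ## Abstract algebra of angles -/

section Angle

variable {n : ℕ} {R : Type u} [Ring R] (a : Fin n → Fin n → Rˣ)

/-- noncommutative angle, as a unit. -/
def Tu (u x y : Fin n) : Rˣ := (a x u)⁻¹ * a x y * (a u y)⁻¹

/-- symmetry of the angle at `u` in `x,y`: equivalent to the triangle relation. -/
def SymAt (u x y : Fin n) : Prop := Tu a u x y = Tu a u y x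

/-- additivity of angles at `u`: equivalent to the exchange relation for the
quadrilateral `(u,x,w,y)` with diagonal `(u,w)`. -/
def AddAt (u x w y : Fin n) : Prop :=
  (Tu a u x y : R) = (Tu a u x w : R) + (Tu a u w y : R)

lemma conv_tri {i j k : Fin n} :
    ((a i j : R) * ↑(a k j)⁻¹ * a k i = (a i k : R) * ↑(a j k)⁻¹ * a j i)
      ↔ SymAt a i j k := by
  have hu : ((a i j : R) * ↑(a k j)⁻¹ * a k i = (a i k : R) * ↑(a j k)⁻¹ * a j i)
      ↔ (a i j * (a k j)⁻¹ * a k i = a i k * (a j k)⁻¹ * a j i) := by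
    rw [Units.ext_iff]; push_cast; rfl
  rw [hu]
  constructor
  · intro h
    have h2 := congrArg Inv.inv h
    simp only [SymAt, Tu]
    group at h2 ⊢
    exact h2.symm
  · intro h
    simp only [SymAt, Tu] at h
    have h2 := congrArg Inv.inv h
    group at h2 ⊢
    exact h2.symm

lemma conv_exch {i j k l : Fin n} :
    ((a j l : R) = (a j k : R) * ↑(a i k)⁻¹ * a i l + (a j i : R) * ↑(a k i)⁻¹ * a k l)
      ↔ AddAt a i j k l := by
  simp only [AddAt, Tu]
  push_cast
  constructor
  · intro h
    have h2 := congrArg (fun z => (↑(a j i)⁻¹ : R) * z * ↑(a i l)⁻¹) h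
    simpa [mul_add, add_mul, mul_assoc, Units.mul_inv, Units.inv_mul,
      Units.mul_inv_cancel_left, Units.inv_mul_cancel_left] using h2
  · intro h
    have h2 := congrArg (fun z => (↑(a j i) : R) * z * ↑(a i l)) h
    simpa [mul_add, add_mul, mul_assoc, Units.mul_inv, Units.inv_mul,
      Units.mul_inv_cancel_left, Units.inv_mul_cancel_left,
      Units.inv_mul_cancel_right, Units.mul_inv_cancel_right] using h2

lemma sym_swap {u x y : Fin n} (h : SymAt a u x y) : SymAt a u y x := h.symm

lemma sym_apex {u x y : Fin n} (h : SymAt a u x y) : SymAt a x u y := by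
  have h' := congrArg (fun z : Rˣ => (a u x)⁻¹ * z⁻¹ * (a x u)⁻¹) h
  simp only [SymAt, Tu] at h' ⊢
  group at h' ⊢
  exact h'

/-- all six forms of the triangle symmetry. -/
lemma sym_forms {u x y : Fin n} (h : SymAt a u x y) :
    SymAt a u y x ∧ SymAt a x u y ∧ SymAt a x y u ∧ SymAt a y u x ∧ SymAt a y x u := by
  have h1 : SymAt a u y x := sym_swap a h
  have h2 : SymAt a x u y := sym_apex a h
  have h3 : SymAt a y u x := sym_apex a h1
  have h4 : SymAt a x y u := sym_swap a h2
  have h5 : SymAt a y x u := sym_swap a h3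
  exact ⟨h1, h2, h4, h3, h5⟩

/-- apex change formula. -/
lemma apex_change (u x y w : Fin n) :
    Tu a u x y = (a w u)⁻¹ * (Tu a w x u)⁻¹ * Tu a w x y * (Tu a w u y)⁻¹ * (a u w)⁻¹ := by
  simp only [Tu]; group

lemma units_abg_plus (α β γ : Rˣ) (h : (β : R) = ↑α + ↑γ) :
    α⁻¹ * β * γ⁻¹ = γ⁻¹ * β * α⁻¹ := by
  ext; push_cast
  rw [h, mul_add, add_mul, mul_add, add_mul]
  simp [Units.inv_mul_cancel_left, Units.mul_inv_cancel_left, mul_assoc,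
    Units.inv_mul, Units.mul_inv]

lemma units_abg_minus (α β γ : Rˣ) (h : (α : R) = ↑β + ↑γ) :
    α⁻¹ * β * γ⁻¹ = γ⁻¹ * β * α⁻¹ := by
  have hb : (β : R) = ↑α - ↑γ := by rw [h]; abel
  ext; push_cast
  rw [hb, mul_sub, sub_mul, mul_sub, sub_mul]
  simp [Units.inv_mul_cancel_left, Units.mul_inv_cancel_left, mul_assoc,
    Units.inv_mul, Units.mul_inv]

/-- the two pivot steps for the triangle symmetry induction. -/
lemma sym_step (w v j k : Fin n)
    (h1 : SymAt a w v j) (h2 : SymAt a w v k) (h3 : SymAt a w j k)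
    (habg : ((Tu a w v k : R) = ↑(Tu a w v j) + ↑(Tu a w j k)) ∨
            ((Tu a w v j : R) = ↑(Tu a w v k) + ↑(Tu a w j k))) :
    SymAt a v j k := by
  have key : (Tu a w v j)⁻¹ * Tu a w v k * (Tu a w j k)⁻¹
      = (Tu a w j k)⁻¹ * Tu a w v k * (Tu a w v j)⁻¹ := by
    rcases habg with h | h
    · exact units_abg_plus _ _ _ h
    · exact units_abg_minus _ _ _ h
  have e1 := apex_change a j v k w
  have e2 := apex_change a j k v w
  rw [← h1, ← h2, ← h3] at e2
  have goal1 : Tu a j v k = Tu a j k v := by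
    rw [e1, e2]
    have h5 := congrArg (fun z : Rˣ => (a w j)⁻¹ * z * (a j w)⁻¹) key
    simpa [mul_assoc] using h5
  exact sym_apex a goal1

/-- The flip lemma: exchange along one diagonal of a quadrilateral implies
exchange along the other. Here `(A,B,C,D)` is the quadrilateral in cyclic order. -/
lemma flip (A B C D : Fin n)
    (fA : (a A C : R) = (a A B : R) * ↑(a D B)⁻¹ * a D C + (a A D : R) * ↑(a B D)⁻¹ * a B C)
    (fB : SymAt a B A C) (fC : SymAt a B D C) :
    (a B D : R) = (a B C : R) * ↑(a A C)⁻¹ * a A D + (a B A : R) * ↑(a C A)⁻¹ * a C D := by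
  simp only [SymAt, Tu] at fB fC
  have h1 := congrArg (fun z : R => z * (↑(a B C)⁻¹ * ↑(a B D))) fA
  simp only [add_mul, mul_assoc, Units.inv_mul_cancel_left, Units.mul_inv_cancel_left,
    Units.mul_inv_cancel_right, Units.inv_mul_cancel_right, Units.inv_mul, Units.mul_inv,
    mul_one, one_mul] at h1
  have h2 : (a A D : R) = ↑(a A C) * (↑(a B C)⁻¹ * ↑(a B D))
      - ↑(a A B) * (↑(a D B)⁻¹ * (↑(a D C) * (↑(a B C)⁻¹ * ↑(a B D)))) := by
    rw [h1]; abel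
  have fC' := congrArg (fun z : Rˣ => ((z * a B D : Rˣ) : R)) fC
  simp only [Tu, mul_inv_rev, inv_inv, Units.val_mul, mul_assoc, Units.inv_mul_cancel_left,
    Units.mul_inv_cancel_left, Units.inv_mul_cancel_right, Units.mul_inv_cancel_right,
    Units.inv_mul, Units.mul_inv, mul_one, one_mul] at fC'
  have U2 := congrArg (fun z : Rˣ => ((z⁻¹ * ((a C B)⁻¹ * a C D) : Rˣ) : R)) fB
  simp only [mul_inv_rev, inv_inv, Units.val_mul, mul_assoc, Units.inv_mul_cancel_left,
    Units.mul_inv_cancel_left, Units.inv_mul_cancel_right, Units.mul_inv_cancel_right,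
    Units.inv_mul, Units.mul_inv, mul_one, one_mul] at U2
  rw [h2]
  simp only [mul_sub, sub_mul, mul_assoc, Units.inv_mul_cancel_left, Units.mul_inv_cancel_left,
    Units.inv_mul_cancel_right, Units.mul_inv_cancel_right, Units.inv_mul, Units.mul_inv,
    mul_one, one_mul]
  rw [fC']
  rw [← U2]
  abel

/-- pivot form of the exchange relation. -/
lemma pivot_iff (p u x w y : Fin n) :
    AddAt a u x w y ↔
      ((Tu a p x y).val =
        (Tu a p x w).val * ((Tu a p u w)⁻¹).val * (Tu a p u y).val
          + (Tu a p x u).val * ((Tu a p w u)⁻¹).val * (Tu a p w y).val) := by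
  constructor
  · intro h
    have h2 := congrArg (fun z : R => ↑(a x p)⁻¹ * (↑(a x u) * z * ↑(a u y)) * ↑(a p y)⁻¹) h
    simp only [AddAt, Tu, mul_inv_rev, inv_inv, Units.val_mul, mul_add, add_mul, mul_assoc,
      Units.inv_mul_cancel_left, Units.mul_inv_cancel_left, Units.inv_mul_cancel_right,
      Units.mul_inv_cancel_right, Units.inv_mul, Units.mul_inv, mul_one, one_mul] at h2 ⊢
    exact h2
  · intro h
    have h2 := congrArg (fun z : R => ↑(a x u)⁻¹ * (↑(a x p) * z * ↑(a p y)) * ↑(a u y)⁻¹) h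
    simp only [AddAt, Tu, mul_inv_rev, inv_inv, Units.val_mul, mul_add, add_mul, mul_assoc,
      Units.inv_mul_cancel_left, Units.mul_inv_cancel_left, Units.inv_mul_cancel_right,
      Units.mul_inv_cancel_right, Units.inv_mul, Units.mul_inv, mul_one, one_mul] at h2 ⊢
    exact h2

/-- backward (apex `k`) form of the exchange relation. -/
lemma back_iff (i j k l : Fin n) :
    AddAt a i j k l ↔
      ((Tu a k j l).val = (Tu a k j i).val + (Tu a k i l).val) := by
  constructor
  · intro h
    have h2 := congrArg (fun z : R => ↑(a j k)⁻¹ * (↑(a j i) * z * ↑(a i l)) * ↑(a k l)⁻¹) h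
    simp only [AddAt, Tu, mul_inv_rev, inv_inv, Units.val_mul, mul_add, add_mul, mul_assoc,
      Units.inv_mul_cancel_left, Units.mul_inv_cancel_left, Units.inv_mul_cancel_right,
      Units.mul_inv_cancel_right, Units.inv_mul, Units.mul_inv, mul_one, one_mul] at h2 ⊢
    exact h2.trans (add_comm _ _)
  · intro h
    have h2 := congrArg (fun z : R => ↑(a j i)⁻¹ * (↑(a j k) * z * ↑(a k l)) * ↑(a i l)⁻¹) h
    simp only [AddAt, Tu, mul_inv_rev, inv_inv, Units.val_mul, mul_add, add_mul, mul_assoc,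
      Units.inv_mul_cancel_left, Units.mul_inv_cancel_left, Units.inv_mul_cancel_right,
      Units.mul_inv_cancel_right, Units.inv_mul, Units.mul_inv, mul_one, one_mul] at h2 ⊢
    exact h2.trans (add_comm _ _)

lemma pivot_compute (G : Rˣ) (A W Y Q : R) (hG : (G : R) = W + Y + Q) :
    A + W = A * ↑G⁻¹ * (Y + Q) + (A + ↑G) * ↑G⁻¹ * W := by
  have h1 : (Y + Q : R) = ↑G - W := by rw [hG]; abel
  rw [h1]
  simp only [mul_sub, sub_mul, add_mul, mul_add, mul_assoc, Units.inv_mul, Units.mul_inv,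
    Units.mul_inv_cancel_left, Units.inv_mul_cancel_left, mul_one, one_mul]
  abel

end Angle

/-! ## The core theorem -/

section CoreThm

variable {n : ℕ} {R : Type u} [Ring R]

theorem core_s3 (a : Fin n → Fin n → Rˣ) (Δ : Set (Fin n × Fin n))
    (hΔ : IsTriangulation Δ) (hn : 2 ≤ n)
    (hS : ∀ i j k : Fin n, i ≠ j → i ≠ k → j ≠ k → (j, k) ∈ Δ → SymAt a i j k)
    (hA : ∀ i j k l : Fin n, IsCyclicSeq [i, j, k, l] → (i, k) ∈ Δ → AddAt a i j k l) :
    (∀ i j k : Fin n, i ≠ j → i ≠ k → j ≠ k → SymAt a i j k) ∧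
    (∀ i j k l : Fin n, IsCyclicSeq [i, j, k, l] → AddAt a i j k l) := by
  have symT : ∀ u x y : Fin n, SymAt a u x y → SymAt a x u y := fun _ _ _ h => sym_apex a h
  have symS : ∀ u x y : Fin n, SymAt a u x y → SymAt a u y x := fun _ _ _ h => h.symm
  have hSd : ∀ x y v : Fin n, (x, y) ∈ Δ → v ≠ x → v ≠ y → SymAt a v x y :=
    fun x y v hxy hvx hvy => hS v x y hvx hvy (tri_ne hΔ hxy) hxy
  have main : ∀ m : ℕ, ∀ j k : Fin n, j ≠ k → mu Δ (j, k) ≤ m →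
      (∀ v, v ≠ j → v ≠ k → SymAt a v j k) ∧
      (∀ x y, IsCyclicSeq [j, x, k, y] → AddAt a j x k y) := by
    intro m
    induction m with
    | zero =>
        intro j k hjk hm
        have hmem : (j, k) ∈ Δ := mem_of_mu_zero hΔ hjk (Nat.le_zero.mp hm)
        exact ⟨fun v hvj hvk => hS v j k hvj hvk hjk hmem,
               fun x y hcyc => hA j x k y hcyc hmem⟩
    | succ m IH =>
        intro j k hjk hm
        by_cases hmem : (j, k) ∈ Δ
        · exact ⟨fun v hvj hvk => hS v j k hvj hvk hjk hmem,
                 fun x y hcyc => hA j x k y hcyc hmem⟩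
        obtain ⟨p, q, hjp, hjq, hpq, hp1, hp2, hq1, hq2, hmuP, hmuQ⟩ :=
          anchor hΔ hn hjk hmem
        have hdk0 : 0 < dd j k := by omega
        have hdkn := dd_lt j k
        have h00 := dd_self j
        have hne_jp : j ≠ p := fun e => by rw [← e, dd_self] at hp1; omega
        have hne_jq : j ≠ q := fun e => by rw [← e, dd_self] at hq1; omega
        have hne_pk : p ≠ k := fun e => by rw [e] at hp2; omega
        have hne_qk : q ≠ k := fun e => by rw [e] at hq1; omega
        have hne_pq : p ≠ q := fun e => by rw [e] at hp2; omega
        have hpj := tri_symm hΔ hjp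
        have hqj := tri_symm hΔ hjq
        have hqp := tri_symm hΔ hpq
        have Gpk := IH p k hne_pk (by omega)
        have Gqk := IH q k hne_qk (by omega)
        have Gkp := IH k p (Ne.symm hne_pk) (by rw [mu_swap Δ k p]; omega)
        have Gkq := IH k q (Ne.symm hne_qk) (by rw [mu_swap Δ k q]; omega)
        have GS : ∀ v, v ≠ j → v ≠ k → SymAt a v j k := by
          intro v hvj hvk
          have hv0 : 0 < dd j v := Nat.pos_of_ne_zero (fun e => hvj (dd_eq_zero_iff.mp e))
          have hvn := dd_lt j v
          have hvk' : dd j v ≠ dd j k := fun e => hvk (dd_inj e)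
          have h3p : SymAt a p j k :=
            symS _ _ _ (symT _ _ _ (hSd p j k hpj (Ne.symm hne_pk) (Ne.symm hjk)))
          have h3q : SymAt a q j k :=
            symS _ _ _ (symT _ _ _ (hSd q j k hqj (Ne.symm hne_qk) (Ne.symm hjk)))
          rcases lt_trichotomy (dd j v) (dd j p) with hr | hr | hr
          · -- v strictly between j and p
            have hvp : v ≠ p := fun e => by rw [e] at hr; omega
            have h1 : SymAt a p v j := symT _ _ _ (hSd p j v hpj hvp hvj)
            have h2 : SymAt a p v k := symT _ _ _ (Gpk.1 v hvp hvk)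
            have hadd : AddAt a p k j v := hA p k j v (cyc4_of_dd j (by omega)) hpj
            unfold AddAt at hadd
            rw [← (h2 : Tu a p v k = Tu a p k v), ← (h3p : Tu a p j k = Tu a p k j),
              ← (h1 : Tu a p v j = Tu a p j v)] at hadd
            exact sym_step a p v j k h1 h2 h3p (Or.inl (hadd.trans (add_comm _ _)))
          · have e := dd_inj hr
            subst e
            exact h3p
          · rcases lt_trichotomy (dd j v) (dd j k) with hs | hs | hs
            · -- v strictly between p and k
              have hvp : v ≠ p := fun e => by rw [e] at hr; omega
              have h1 : SymAt a p v j := symT _ _ _ (hSd p j v hpj hvp hvj)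
              have h2 : SymAt a p v k := symT _ _ _ (Gpk.1 v hvp hvk)
              have hadd : AddAt a p v k j := Gpk.2 v j (cyc4_of_dd j (by omega))
              unfold AddAt at hadd
              rw [← (h3p : Tu a p j k = Tu a p k j)] at hadd
              exact sym_step a p v j k h1 h2 h3p (Or.inr hadd)
            · exact absurd hs hvk'
            · rcases lt_trichotomy (dd j v) (dd j q) with ht | ht | ht
              · -- v strictly between k and q
                have hvq : v ≠ q := fun e => by rw [e] at ht; omega
                have h1 : SymAt a q v j := symT _ _ _ (hSd q j v hqj hvq hvj)
                have h2 : SymAt a q v k := symT _ _ _ (Gqk.1 v hvq hvk)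
                have hadd : AddAt a q j k v := Gqk.2 j v (cyc4_of_dd j (by omega))
                unfold AddAt at hadd
                rw [← (h1 : Tu a q v j = Tu a q j v),
                  ← (h2 : Tu a q v k = Tu a q k v)] at hadd
                exact sym_step a q v j k h1 h2 h3q (Or.inr (hadd.trans (add_comm _ _)))
              · have e := dd_inj ht
                subst e
                exact h3q
              · -- v strictly between q and j
                have hvq : v ≠ q := fun e => by rw [e] at ht; omega
                have h1 : SymAt a q v j := symT _ _ _ (hSd q j v hqj hvq hvj)
                have h2 : SymAt a q v k := symT _ _ _ (Gqk.1 v hvq hvk)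
                have hadd : AddAt a q v j k := hA q v j k (cyc4_of_dd j (by omega)) hqj
                unfold AddAt at hadd
                exact sym_step a q v j k h1 h2 h3q (Or.inl hadd)
        refine ⟨GS, ?_⟩
        -- the special quadrilateral, both orientations
        have Se1 : AddAt a j p k q := by
          refine (conv_exch a).mp (flip a j p k q ?_ ?_ ?_)
          · exact (conv_exch a).mpr (hA q j p k (cyc4_of_dd j (by omega)) hqp)
          · exact GS p (Ne.symm hne_jp) hne_pk
          · exact symS _ _ _ (symT _ _ _ (hSd p q k hpq (Ne.symm hne_pk) (Ne.symm hne_qk)))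
        have Se2 : AddAt a k q j p := by
          refine (conv_exch a).mp (flip a k q j p ?_ ?_ ?_)
          · exact (conv_exch a).mpr (hA p k q j (cyc4_of_dd j (by omega)) hpq)
          · exact symS _ _ _ (GS q (Ne.symm hne_jq) hne_qk)
          · exact symT _ _ _ (symS _ _ _ (symT _ _ _ (hSd p q j hpq hne_jp hne_jq)))
        -- case x strictly between p and k, y = q
        have A5 : ∀ z : Fin n, dd j p < dd j z → dd j z < dd j k → AddAt a j z k q := by
          intro z hz1 hz2
          have hz0 : 0 < dd j z := by omega
          have hzn := dd_lt j z
          have hzj : z ≠ j := fun e => by rw [e, dd_self] at hz0; omega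
          have hzk : z ≠ k := fun e => by rw [e] at hz2; omega
          have hzq : z ≠ q := fun e => by rw [e] at hz2; omega
          have d1 : AddAt a k q p z := Gkp.2 q z (cyc4_of_dd j (by omega))
          have d2 : AddAt a k j p z := Gkp.2 j z (cyc4_of_dd j (by omega))
          have e2 : AddAt a k q j z := by
            unfold AddAt at d1 d2 Se2 ⊢
            rw [d1, d2, Se2]
            abel
          have e2' := (back_iff a k q j z).mp e2
          have s1 : SymAt a j z q := symT _ _ _ (hSd j q z hjq hzj hzq)
          have s2 : SymAt a j k q := symT _ _ _ (hSd j q k hjq (Ne.symm hjk) (Ne.symm hne_qk))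
          have s3 : SymAt a j z k := symT _ _ _ (GS z hzj hzk)
          unfold AddAt
          rw [(s1 : Tu a j z q = Tu a j q z), (s3 : Tu a j z k = Tu a j k z),
            (s2 : Tu a j k q = Tu a j q k), e2']
          abel
        -- case x = p, y strictly between k and q
        have A8p : ∀ z : Fin n, dd j k < dd j z → dd j z < dd j q → AddAt a j p k z := by
          intro z hz1 hz2
          have hzn := dd_lt j z
          have hzj : z ≠ j := fun e => by rw [e, dd_self] at hz1; omega
          have hzk : z ≠ k := fun e => by rw [e] at hz1; omega
          have hzp : z ≠ p := fun e => by rw [e] at hz1; omega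
          have d1 : AddAt a k z q p := Gkq.2 z p (cyc4_of_dd j (by omega))
          have d2 : AddAt a k z q j := Gkq.2 z j (cyc4_of_dd j (by omega))
          have e2 : AddAt a k z j p := by
            unfold AddAt at d1 d2 Se2 ⊢
            rw [d1, d2, Se2]
            abel
          have e2' := (back_iff a k z j p).mp e2
          have s1 : SymAt a j p z := symS _ _ _ (symT _ _ _ (hSd j p z hjp hzj hzp))
          have s2 : SymAt a j p k :=
            symS _ _ _ (symT _ _ _ (hSd j p k hjp (Ne.symm hjk) (Ne.symm hne_pk)))
          have s3 : SymAt a j k z := symS _ _ _ (symT _ _ _ (GS z hzj hzk))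
          unfold AddAt
          rw [(s1 : Tu a j p z = Tu a j z p), (s2 : Tu a j p k = Tu a j k p),
            (s3 : Tu a j k z = Tu a j z k), e2']
          abel
        intro x y hcyc
        obtain ⟨hx0, hxk, hky⟩ := cyc4_iff.mp hcyc
        have hyn := dd_lt j y
        have hxn := dd_lt j x
        rcases lt_trichotomy (dd j x) (dd j p) with hx | hx | hx <;>
          rcases lt_trichotomy (dd j y) (dd j q) with hy | hy | hy
        · -- x ∈ (j,p), y ∈ (k,q)
          have c1 : AddAt a j x p y := hA j x p y (cyc4_of_dd j (by omega)) hjp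
          have c3 : AddAt a j x p k := hA j x p k (cyc4_of_dd j (by omega)) hjp
          have c8 := A8p y (by omega) hy
          unfold AddAt at c1 c3 c8 ⊢
          rw [c1, c8, c3]
          abel
        · -- x ∈ (j,p), y = q
          have e := dd_inj hy
          subst e
          have c1 : AddAt a j x p y := hA j x p y (cyc4_of_dd j (by omega)) hjp
          have c3 : AddAt a j x p k := hA j x p k (cyc4_of_dd j (by omega)) hjp
          unfold AddAt at c1 c3 Se1 ⊢
          rw [c1, Se1, c3]
          abel
        · -- x ∈ (j,p), y ∈ (q,j)
          have c1 : AddAt a j x p y := hA j x p y (cyc4_of_dd j (by omega)) hjp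
          have c2 : AddAt a j p q y := hA j p q y (cyc4_of_dd j (by omega)) hjq
          have c3 : AddAt a j x p k := hA j x p k (cyc4_of_dd j (by omega)) hjp
          have c4 : AddAt a j k q y := hA j k q y (cyc4_of_dd j (by omega)) hjq
          unfold AddAt at c1 c2 c3 c4 Se1 ⊢
          rw [c1, c2, Se1, c3, c4]
          abel
        · -- x = p, y ∈ (k,q)
          have e := dd_inj hx
          subst e
          exact A8p y (by omega) hy
        · -- x = p, y = q
          have e := dd_inj hx
          subst e
          have e2 := dd_inj hy
          subst e2
          exact Se1
        · -- x = p, y ∈ (q,j)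
          have e := dd_inj hx
          subst e
          have c2 : AddAt a j x q y := hA j x q y (cyc4_of_dd j (by omega)) hjq
          have c4 : AddAt a j k q y := hA j k q y (cyc4_of_dd j (by omega)) hjq
          unfold AddAt at c2 c4 Se1 ⊢
          rw [c2, Se1, c4]
          abel
        · -- x ∈ (p,k), y ∈ (k,q) : the doubly inner case, by pivoting at p
          have hyq : y ≠ q := fun e => by rw [e] at hy; omega
          have hyj : y ≠ j := fun e => by rw [e, dd_self] at hky; omega
          have hyp : y ≠ p := fun e => by rw [e] at hky; omega
          have hyk : y ≠ k := fun e => by rw [e] at hky; omega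
          have hxj : x ≠ j := fun e => by rw [e, dd_self] at hx0; omega
          have hxp : x ≠ p := fun e => by rw [e] at hx; omega
          have hxk' : x ≠ k := fun e => by rw [e] at hxk; omega
          have k7 : AddAt a p k y q := by
            refine (conv_exch a).mp (flip a p k y q ?_ ?_ ?_)
            · exact (conv_exch a).mpr (Gqk.2 p y (cyc4_of_dd j (by omega)))
            · exact symS _ _ _ (symT _ _ _ (Gkp.1 y hyk hyp))
            · exact symS _ _ _ (symT _ _ _ (Gkq.1 y hyk hyq))
          have k1 : AddAt a p x k y := Gpk.2 x y (cyc4_of_dd j (by omega))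
          have k2 : AddAt a p k q j := hA p k q j (cyc4_of_dd j (by omega)) hpq
          have k3 : SymAt a p j k := GS p (Ne.symm hne_jp) hne_pk
          have k4 : SymAt a p j y := symS _ _ _ (symT _ _ _ (hSd p j y hpj hyp hyj))
          have k5 : AddAt a p y q j := hA p y q j (cyc4_of_dd j (by omega)) hpq
          have k6 : AddAt a p x k j := Gpk.2 x j (cyc4_of_dd j (by omega))
          refine (pivot_iff a p j x k y).mpr ?_
          rw [(k3 : Tu a p j k = Tu a p k j), (k4 : Tu a p j y = Tu a p y j)]
          unfold AddAt at k1 k2 k5 k6 k7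
          rw [k1, k5, k6]
          have hG : (Tu a p k j : R) =
              ↑(Tu a p k y) + ↑(Tu a p y q) + ↑(Tu a p q j) := by
            rw [k2, k7]
          exact pivot_compute (Tu a p k j) _ _ _ _ hG
        · -- x ∈ (p,k), y = q
          have e := dd_inj hy
          subst e
          exact A5 x hx hxk
        · -- x ∈ (p,k), y ∈ (q,j)
          have c5 : AddAt a j x q y := hA j x q y (cyc4_of_dd j (by omega)) hjq
          have c4 : AddAt a j k q y := hA j k q y (cyc4_of_dd j (by omega)) hjq
          have cA := A5 x hx hxk
          unfold AddAt at c5 c4 cA ⊢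
          rw [c5, cA, c4]
          abel
  constructor
  · intro i j k hij hik hjk
    exact (main (mu Δ (j, k)) j k hjk le_rfl).1 i hij hik
  · intro i j k l hcyc
    have hik : i ≠ k := (cyc4_ne hcyc).2.1
    exact (main (mu Δ (i, k)) i k hik le_rfl).2 j l hcyc

end CoreThm

/-! ## Plumbing: the universal property -/

section Plumb

variable {n : ℕ} (Δ : Set (Fin n × Fin n))

lemma X_mem_ADelta (i j : Fin n) : X i j ∈ ADelta n Δ := by
  by_cases h : i = j
  · subst h
    have : X i i = 1 := by
      simp [X, xF]
    rw [this]; exact one_mem _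
  · exact Algebra.subset_adjoin (Or.inl ⟨i, j, h, rfl⟩)

lemma Xinv_mem_ADelta {i j : Fin n} (h : (i, j) ∈ Δ) : Xinv i j ∈ ADelta n Δ := by
  exact Algebra.subset_adjoin (Or.inr ⟨(i, j), h, rfl⟩)

/-- `x_{ij}` as an element of `𝒜_Δ`. -/
def xe (i j : Fin n) : ADelta n Δ := ⟨X i j, X_mem_ADelta Δ i j⟩

/-- `x_{ij}⁻¹` as an element of `𝒜_Δ`, for `(i,j) ∈ Δ`. -/
def xie {i j : Fin n} (h : (i, j) ∈ Δ) : ADelta n Δ := ⟨Xinv i j, Xinv_mem_ADelta Δ h⟩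

lemma X_mul_Xinv {i j : Fin n} (h : i ≠ j) : X i j * Xinv i j = 1 := by
  have := RingQuot.mkAlgHom_rel ℚ (ARel.mul_inv h)
  simpa [X, Xinv, map_mul, map_one] using this

lemma Xinv_mul_X {i j : Fin n} (h : i ≠ j) : Xinv i j * X i j = 1 := by
  have := RingQuot.mkAlgHom_rel ℚ (ARel.inv_mul h)
  simpa [X, Xinv, map_mul, map_one] using this

lemma rel_triangle {i j k : Fin n} (hij : i ≠ j) (hik : i ≠ k) (hjk : j ≠ k) :
    X i j * Xinv k j * X k i = X i k * Xinv j k * X j i := by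
  have := RingQuot.mkAlgHom_rel ℚ (ARel.triangle hij hik hjk)
  simpa [X, Xinv, map_mul] using this

lemma rel_exchange {i j k l : Fin n} (h : IsCyclicSeq [i, j, k, l]) :
    X j l = X j k * Xinv i k * X i l + X j i * Xinv k i * X k l := by
  have := RingQuot.mkAlgHom_rel ℚ (ARel.exchange h)
  simpa [X, Xinv, map_mul, map_add] using this

end Plumb

/-- `𝒜_n` is the universal localization of `𝒜_Δ` by the multiplicative
submonoid `S` generated by all `x_{ij}`. -/
theorem An_is_universal_localization (n : ℕ) (hn : 2 ≤ n) (Δ : Set (Fin n × Fin n))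
    (hΔ : IsTriangulation Δ) :
    (∀ s ∈ Submonoid.closure
        {a : ADelta n Δ | ∃ i j : Fin n, i ≠ j ∧ (a : NCPoly n) = X i j},
      IsUnit (s : NCPoly n)) ∧
    ∀ (B : Type u) [Ring B] [Algebra ℚ B] (φ : ADelta n Δ →ₐ[ℚ] B),
      (∀ s ∈ Submonoid.closure
          {a : ADelta n Δ | ∃ i j : Fin n, i ≠ j ∧ (a : NCPoly n) = X i j},
        IsUnit (φ s)) →
      ∃! ψ : NCPoly n →ₐ[ℚ] B, ∀ a : ADelta n Δ, ψ ↑a = φ a := by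
  constructor
  · -- every element of S is a unit of 𝒜_n
    intro s hs
    induction hs using Submonoid.closure_induction with
    | mem x hx =>
        obtain ⟨i, j, hij, hxe⟩ := hx
        rw [hxe]
        exact ⟨⟨X i j, Xinv i j, X_mul_Xinv hij, Xinv_mul_X hij⟩, rfl⟩
    | one => simpa using isUnit_one
    | mul x y hx hy ihx ihy => simpa using ihx.mul ihy
  · intro B _ _ φ hφ
    have hu : ∀ (i j : Fin n), i ≠ j → IsUnit (φ (xe Δ i j)) := fun i j hij =>
      hφ _ (Submonoid.subset_closure ⟨i, j, hij, rfl⟩)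
    classical
    set a : Fin n → Fin n → Bˣ :=
      fun i j => if h : i ≠ j then (hu i j h).unit else 1 with ha_def
    have ha : ∀ (i j : Fin n), i ≠ j → (a i j : B) = φ (xe Δ i j) := by
      intro i j h
      rw [ha_def]
      simp only [dif_pos h]
      exact (hu i j h).unit_spec
    have hainv : ∀ (i j : Fin n) (hd : (i, j) ∈ Δ), φ (xie Δ hd) = ((a i j)⁻¹ : Bˣ) := by
      intro i j hd
      have hij := tri_ne hΔ hd
      have h1 : xe Δ i j * xie Δ hd = 1 := Subtype.ext (by
        push_cast
        exact X_mul_Xinv hij)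
      have e1 : (a i j : B) * φ (xie Δ hd) = 1 := by
        rw [ha i j hij, ← map_mul, h1, map_one]
      calc φ (xie Δ hd) = ↑(a i j)⁻¹ * ((a i j : B) * φ (xie Δ hd)) := by
            rw [Units.inv_mul_cancel_left]
        _ = ↑(a i j)⁻¹ := by rw [e1, mul_one]
    have hSb : ∀ i j k : Fin n, i ≠ j → i ≠ k → j ≠ k → (j, k) ∈ Δ → SymAt a i j k := by
      intro i j k hij hik hjk hd
      have hdkj : (k, j) ∈ Δ := tri_symm hΔ hd
      have h1 : xe Δ i j * xie Δ hdkj * xe Δ k i = xe Δ i k * xie Δ hd * xe Δ j i :=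
        Subtype.ext (by
          push_cast
          exact rel_triangle hij hik hjk)
      have h2 := congrArg φ h1
      rw [map_mul, map_mul, map_mul, map_mul] at h2
      rw [hainv k j hdkj, hainv j k hd] at h2
      rw [← ha i j hij, ← ha k i (Ne.symm hik), ← ha i k hik, ← ha j i (Ne.symm hij)] at h2
      exact (conv_tri a).mp h2
    have hAb : ∀ i j k l : Fin n, IsCyclicSeq [i, j, k, l] → (i, k) ∈ Δ →
        AddAt a i j k l := by
      intro i j k l hcyc hd
      obtain ⟨hij, hik, hil, hjk, hjl, hkl⟩ := cyc4_ne hcyc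
      have hdki : (k, i) ∈ Δ := tri_symm hΔ hd
      have h1 : xe Δ j l =
          xe Δ j k * xie Δ hd * xe Δ i l + xe Δ j i * xie Δ hdki * xe Δ k l :=
        Subtype.ext (by
          push_cast
          exact rel_exchange hcyc)
      have h2 := congrArg φ h1
      rw [map_add, map_mul, map_mul, map_mul, map_mul] at h2
      rw [hainv i k hd, hainv k i hdki] at h2
      rw [← ha j l hjl, ← ha j k hjk, ← ha i l hil, ← ha j i (Ne.symm hij),
        ← ha k l hkl] at h2
      exact (conv_exch a).mp h2
    obtain ⟨CS, CA⟩ := core_s3 a Δ hΔ hn hSb hAb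
    set f : AGen n → B := fun g =>
      match g with
      | Sum.inl x => (a x.1.1 x.1.2 : B)
      | Sum.inr x => ((a x.1.1 x.1.2)⁻¹ : Bˣ) with hf_def
    set F : FreeAlgebra ℚ (AGen n) →ₐ[ℚ] B := FreeAlgebra.lift ℚ f with hF_def
    have hFx : ∀ (i j : Fin n), i ≠ j → F (xF i j) = (a i j : B) := by
      intro i j h
      rw [hF_def, xF, dif_pos h, FreeAlgebra.lift_ι_apply]
    have hFxi : ∀ (i j : Fin n), i ≠ j → F (xiF i j) = ((a i j)⁻¹ : Bˣ) := by
      intro i j h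
      rw [hF_def, xiF, dif_pos h, FreeAlgebra.lift_ι_apply]
    have hF : ∀ ⦃x y⦄, ARel n x y → F x = F y := by
      intro x y hrel
      induction hrel with
      | @mul_inv i j h =>
          rw [map_mul, map_one, hFx i j h, hFxi i j h, Units.mul_inv]
      | @inv_mul i j h =>
          rw [map_mul, map_one, hFx i j h, hFxi i j h, Units.inv_mul]
      | @triangle i j k hij hik hjk =>
          rw [map_mul, map_mul, map_mul, map_mul,
            hFx i j hij, hFx k i (Ne.symm hik), hFx i k hik, hFx j i (Ne.symm hij),
            hFxi k j (Ne.symm hjk), hFxi j k hjk]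
          exact (conv_tri a).mpr (CS i j k hij hik hjk)
      | @exchange i j k l h =>
          obtain ⟨hij, hik, hil, hjk, hjl, hkl⟩ := cyc4_ne h
          rw [map_add, map_mul, map_mul, map_mul, map_mul,
            hFx j l hjl, hFx j k hjk, hFx i l hil, hFx j i (Ne.symm hij), hFx k l hkl,
            hFxi i k hik, hFxi k i (Ne.symm hik)]
          exact (conv_exch a).mpr (CA i j k l h)
    set ψ : NCPoly n →ₐ[ℚ] B := RingQuot.liftAlgHom ℚ ⟨F, hF⟩ with hψ_def
    have hψ : ∀ z : FreeAlgebra ℚ (AGen n), ψ (RingQuot.mkAlgHom ℚ (ARel n) z) = F z := by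
      intro z
      rw [hψ_def]
      exact RingQuot.liftAlgHom_mkAlgHom_apply ℚ F hF z
    have hrest : ∀ (x : NCPoly n) (hx : x ∈ ADelta n Δ), ψ x = φ ⟨x, hx⟩ := by
      intro x hx
      induction hx using Algebra.adjoin_induction with
      | mem z hz =>
          rcases hz with ⟨i, j, hij, rfl⟩ | ⟨pp, hpp, rfl⟩
          · have : ψ (X i j) = (a i j : B) := by
              rw [X, hψ, hFx i j hij]
            rw [this, ha i j hij]
            exact congrArg φ (Subtype.ext rfl)
          · have hne := tri_ne hΔ hpp
            have : ψ (Xinv pp.1 pp.2) = ((a pp.1 pp.2)⁻¹ : Bˣ) := by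
              rw [Xinv, hψ, hFxi pp.1 pp.2 hne]
            rw [this, ← hainv pp.1 pp.2 hpp]
            exact congrArg φ (Subtype.ext rfl)
      | algebraMap r =>
          rw [AlgHom.commutes]
          have : (⟨algebraMap ℚ (NCPoly n) r, _⟩ : ADelta n Δ) =
              algebraMap ℚ (ADelta n Δ) r := Subtype.ext rfl
          rw [this, AlgHom.commutes]
      | add z w hz hw ihz ihw =>
          rw [map_add, ihz, ihw]
          have : (⟨z + w, _⟩ : ADelta n Δ) = ⟨z, hz⟩ + ⟨w, hw⟩ := Subtype.ext rfl
          rw [this, map_add]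
      | mul z w hz hw ihz ihw =>
          rw [map_mul, ihz, ihw]
          have : (⟨z * w, _⟩ : ADelta n Δ) = ⟨z, hz⟩ * ⟨w, hw⟩ := Subtype.ext rfl
          rw [this, map_mul]
    refine ⟨ψ, fun b => hrest b.1 b.2, ?_⟩
    intro ψ' hψ'
    have hXeq : ∀ (i j : Fin n), ψ' (X i j) = ψ (X i j) := by
      intro i j
      have h1 : ψ' (X i j) = φ (xe Δ i j) := hψ' (xe Δ i j)
      have h2 : ψ (X i j) = φ (xe Δ i j) := hrest (X i j) (X_mem_ADelta Δ i j)
      rw [h1, h2]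
    have hXinveq : ∀ (i j : Fin n), i ≠ j → ψ' (Xinv i j) = ψ (Xinv i j) := by
      intro i j hij
      have e1 : ψ' (X i j) * ψ' (Xinv i j) = 1 := by
        rw [← map_mul, X_mul_Xinv hij, map_one]
      have e2 : ψ (Xinv i j) * ψ (X i j) = 1 := by
        rw [← map_mul, Xinv_mul_X hij, map_one]
      calc ψ' (Xinv i j) = (ψ (Xinv i j) * ψ (X i j)) * ψ' (Xinv i j) := by
            rw [e2, one_mul]
        _ = ψ (Xinv i j) * (ψ (X i j) * ψ' (Xinv i j)) := by rw [mul_assoc]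
        _ = ψ (Xinv i j) := by rw [hXeq i j] at e1; rw [e1, mul_one]
    apply RingQuot.ringQuot_ext'
    apply FreeAlgebra.hom_ext
    funext g
    simp only [Function.comp_apply, AlgHom.coe_comp]
    match g with
    | Sum.inl x =>
        have hx := x.2
        have hX : RingQuot.mkAlgHom ℚ (ARel n) (FreeAlgebra.ι ℚ (Sum.inl x)) =
            X x.1.1 x.1.2 := by
          rw [X, xF, dif_pos hx]
        show ψ' (RingQuot.mkAlgHom ℚ (ARel n) (FreeAlgebra.ι ℚ (Sum.inl x))) =
          ψ (RingQuot.mkAlgHom ℚ (ARel n) (FreeAlgebra.ι ℚ (Sum.inl x)))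
        rw [hX]
        exact hXeq x.1.1 x.1.2
    | Sum.inr x =>
        have hx := x.2
        have hX : RingQuot.mkAlgHom ℚ (ARel n) (FreeAlgebra.ι ℚ (Sum.inr x)) =
            Xinv x.1.1 x.1.2 := by
          rw [Xinv, xiF, dif_pos hx]
        show ψ' (RingQuot.mkAlgHom ℚ (ARel n) (FreeAlgebra.ι ℚ (Sum.inr x))) =
          ψ (RingQuot.mkAlgHom ℚ (ARel n) (FreeAlgebra.ι ℚ (Sum.inr x)))
        rw [hX]
        exact hXinveq x.1.1 x.1.2 hx


end NCPolygon
end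
end
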